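/- arXiv:2104.02914 — 5 statements merged into one kernel-verified Lean document; each statement's English description precedes it below -/
import Mathlib

section
/- Let n ≥ 2, let R be a commutative ℚ-algebra, and let ϖ_1,…,ϖ_{n−1} ∈ R satisfy the Peterson relations, with the convention ϖ_0 = ϖ_n = 0. Then for all integers a, i, b with 1 ≤ a ≤ i ≤ b ≤ n−1, one has (ϖ_a ϖ_{a+1} ⋯ ϖ_i)·(ϖ_i ϖ_{i+1} ⋯ ϖ_b) = ((b−i+1)/(b−a+2))·(ϖ_{a−1} ϖ_a ⋯ ϖ_b) + ((i−a+1)/(b−a+2))·(ϖ_a ϖ_{a+1} ⋯ ϖ_b ϖ_{b+1}), where each displayed product is the product of the ϖ_t over the indicated range of consecutive indices t. -/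
private lemma cancel_qmul {R : Type*} [CommRing R] [Algebra ℚ R] (q : ℚ) (hq : q ≠ 0)
    {x y : R} (h : algebraMap ℚ R q * x = algebraMap ℚ R q * y) : x = y := by
  have h2 : ∀ z : R, q⁻¹ • (algebraMap ℚ R q * z) = z := by
    intro z
    rw [Algebra.smul_def, ← mul_assoc, ← map_mul, inv_mul_cancel₀ hq, map_one, one_mul]
  rw [← h2 x, ← h2 y, h]

private lemma peterson_key {R : Type*} [CommRing R] [Algebra ℚ R] (n : ℕ) (ϖ : ℕ → R)
    (hrel : ∀ i : ℕ, 1 ≤ i → i ≤ n - 1 → ϖ i * (2 * ϖ i - ϖ (i - 1) - ϖ (i + 1)) = 0) :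
    ∀ m a b i : ℕ, 1 ≤ a → a + m = b → b ≤ n - 1 → a ≤ i → i ≤ b →
      ((b : R) - a + 2) * (ϖ i * ∏ t ∈ Finset.Ico a (b + 1), ϖ t)
        = ((b : R) - i + 1) * ∏ t ∈ Finset.Ico (a - 1) (b + 1), ϖ t
          + ((i : R) - a + 1) * ∏ t ∈ Finset.Ico a (b + 2), ϖ t := by
  intro m
  induction m with
  | zero =>
    intro a b i ha hab hb hai hib
    obtain ⟨a', rfl⟩ : ∃ a', a = a' + 1 := ⟨a - 1, by omega⟩
    obtain rfl : b = a' + 1 := by omega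
    obtain rfl : i = a' + 1 := by omega
    have h2 := hrel (a' + 1) (by omega) (by omega)
    simp only [Nat.add_sub_cancel] at h2 ⊢
    rw [show a' + 1 + 2 = (a' + 1 + 1) + 1 by omega,
        Finset.prod_Ico_succ_top (show a' + 1 ≤ a' + 1 + 1 by omega),
        Finset.prod_Ico_succ_top (show a' ≤ a' + 1 by omega),
        Nat.Ico_succ_singleton, Nat.Ico_succ_singleton, Finset.prod_singleton,
        Finset.prod_singleton]
    push_cast
    linear_combination h2
  | succ m IH =>
    intro a b i ha hab hb hai hib
    obtain rfl : b = (a + m) + 1 := by omega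
    set c := a + m with hc
    have hac : a ≤ c := Nat.le_add_right a m
    have h1 := IH a c c ha rfl (by omega) hac le_rfl
    have h2 := hrel (c + 1) (by omega) hb
    simp only [Nat.add_sub_cancel] at h2
    rw [show c + 1 + 1 = c + 2 by omega] at h2
    rw [show c + 2 = (c + 1) + 1 by omega,
        Finset.prod_Ico_succ_top (show a ≤ c + 1 by omega)] at h1
    have Xeq : ((c : R) - a + 3) * (ϖ (c + 1) * (ϖ (c + 1) * ∏ t ∈ Finset.Ico a (c + 1), ϖ t))
        = (∏ t ∈ Finset.Ico (a - 1) (c + 1), ϖ t) * ϖ (c + 1)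
          + ((c : R) - a + 2)
            * ((∏ t ∈ Finset.Ico a (c + 1), ϖ t) * ϖ (c + 1) * ϖ (c + 2)) := by
      linear_combination ϖ (c + 1) * h1
        + ((c : R) - a + 2) * (∏ t ∈ Finset.Ico a (c + 1), ϖ t) * h2
    -- expand the products in the goal
    rw [show c + 1 + 2 = (c + 2) + 1 by omega,
        Finset.prod_Ico_succ_top (show a ≤ c + 2 by omega),
        show c + 1 + 1 = (c + 1) + 1 by omega,
        Finset.prod_Ico_succ_top (show a ≤ c + 1 by omega),
        Finset.prod_Ico_succ_top (show a - 1 ≤ c + 1 by omega)]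
    rcases eq_or_lt_of_le hib with hibe | hlt
    · subst hibe
      push_cast
      linear_combination Xeq
    · have hic : i ≤ c := by omega
      have h3 := IH a c i ha rfl (by omega) hai hic
      rw [show c + 2 = (c + 1) + 1 by omega,
          Finset.prod_Ico_succ_top (show a ≤ c + 1 by omega)] at h3
      push_cast
      have hqne : ((c : ℚ) - a + 2) ≠ 0 := by
        have : (a : ℚ) ≤ c := by exact_mod_cast hac
        linarith
      refine cancel_qmul ((c : ℚ) - a + 2) hqne ?_
      have hm : algebraMap ℚ R ((c : ℚ) - a + 2) = ((c : R) - a + 2) := by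
        simp [map_sub, map_add, map_ofNat]
      rw [hm]
      linear_combination (((c : R) - a + 3) * ϖ (c + 1)) * h3 + ((i : R) - a + 1) * Xeq



/-- Let `n ≥ 2`, let `R` be a commutative `ℚ`-algebra, and let
`ϖ_1, …, ϖ_{n-1} ∈ R` satisfy the Peterson relations
`ϖ_i (2ϖ_i − ϖ_{i−1} − ϖ_{i+1}) = 0` for `1 ≤ i ≤ n-1`, with `ϖ_0 = ϖ_n = 0`.
Then for `1 ≤ a ≤ i ≤ b ≤ n-1`:
`(ϖ_a ⋯ ϖ_i)(ϖ_i ⋯ ϖ_b)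
  = ((b−i+1)/(b−a+2)) (ϖ_{a−1} ⋯ ϖ_b) + ((i−a+1)/(b−a+2)) (ϖ_a ⋯ ϖ_{b+1})`. -/
theorem peterson_square_expansion (n : ℕ) (hn : 2 ≤ n)
    {R : Type*} [CommRing R] [Algebra ℚ R] (ϖ : ℕ → R)
    (h0 : ϖ 0 = 0) (htop : ϖ n = 0)
    (hrel : ∀ i : ℕ, 1 ≤ i → i ≤ n - 1 → ϖ i * (2 * ϖ i - ϖ (i - 1) - ϖ (i + 1)) = 0)
    (a i b : ℕ) (ha : 1 ≤ a) (hai : a ≤ i) (hib : i ≤ b) (hb : b ≤ n - 1) :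
    (∏ t ∈ Finset.Icc a i, ϖ t) * (∏ t ∈ Finset.Icc i b, ϖ t) =
      (((b : ℚ) - i + 1) / ((b : ℚ) - a + 2)) • (∏ t ∈ Finset.Icc (a - 1) b, ϖ t) +
      (((i : ℚ) - a + 1) / ((b : ℚ) - a + 2)) • (∏ t ∈ Finset.Icc a (b + 1), ϖ t) := by
  have K := peterson_key n ϖ hrel (b - a) a b i ha (by omega) hb hai hib
  -- rewrite Icc as Ico
  rw [← Finset.Ico_add_one_right_eq_Icc, ← Finset.Ico_add_one_right_eq_Icc (a - 1) b, ← Finset.Ico_add_one_right_eq_Icc a (b + 1),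
      ← Finset.Ico_add_one_right_eq_Icc i b]
  have hsplit : (∏ t ∈ Finset.Ico a (i + 1), ϖ t) * (∏ t ∈ Finset.Ico i (b + 1), ϖ t)
      = ϖ i * ∏ t ∈ Finset.Ico a (b + 1), ϖ t := by
    rw [Finset.prod_eq_prod_Ico_succ_bot (show i < b + 1 by omega) ϖ,
        ← mul_assoc, mul_comm (∏ t ∈ Finset.Ico a (i + 1), ϖ t) (ϖ i), mul_assoc,
        Finset.prod_Ico_consecutive _ (show a ≤ i + 1 by omega) (show i + 1 ≤ b + 1 by omega)]
  rw [hsplit]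
  have hqne : ((b : ℚ) - a + 2) ≠ 0 := by
    have : (a : ℚ) ≤ b := by exact_mod_cast (le_trans hai hib)
    linarith
  have K' : ((b : ℚ) - a + 2) • (ϖ i * ∏ t ∈ Finset.Ico a (b + 1), ϖ t)
      = ((b : ℚ) - i + 1) • (∏ t ∈ Finset.Ico (a - 1) (b + 1), ϖ t)
        + ((i : ℚ) - a + 1) • (∏ t ∈ Finset.Ico a (b + 2), ϖ t) := by
    simp only [Algebra.smul_def, map_sub, map_add, map_natCast, map_one, map_ofNat]
    exact K
  have := congrArg (fun z => ((b : ℚ) - a + 2)⁻¹ • z) K'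
  simp only [smul_add, smul_smul, inv_mul_cancel₀ hqne, one_smul] at this
  rw [this, div_eq_inv_mul, div_eq_inv_mul]
  rfl
end

section
/- Let n ≥ 2, let R be a commutative ℚ-algebra, and let ϖ_1,…,ϖ_{n−1} ∈ R satisfy the Peterson relations, with ϖ_0 = ϖ_n = 0. For J ⊆ {1,…,n−1} set ϖ_J := (1/m_J)·∏_{i∈J} ϖ_i. Then for all J, K ⊆ {1,…,n−1}: ϖ_J · ϖ_K = Σ_{L ⊆ {1,…,n−1}} d_{JK}^L · ϖ_L, where d_{JK}^L = (m_L/(m_J m_K))·Σ_{ε ∈ Δ_{JK}^L} wt(ε) is the left-right diagram structure constant; moreover d_{JK}^L = 0 unless J ∪ K ⊆ L and |L| = |J| + |K|. -/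
open scoped Classical

noncomputable section

/-- The connected component of `i` in `S ⊆ ℕ`: all `j ∈ S` that are joined to `i` by a
string of consecutive integers lying in `S`. -/
def componentOf (S : Finset ℕ) (i : ℕ) : Finset ℕ :=
  S.filter (fun j => Finset.Icc (min i j) (max i j) ⊆ S)

/-- `m_J`: the product of the factorials of the sizes of the connected components of `J`
(each component is counted once via its minimum, i.e. via `i ∈ J` with `i - 1 ∉ J`). -/
def mConst (J : Finset ℕ) : ℕ :=
  ∏ i ∈ J.filter (fun i => i - 1 ∉ J), (componentOf J i).card.factorial

/-- The left endpoint `a` of the connected component of `i` in `S`. -/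
def compMin (S : Finset ℕ) (i : ℕ) : ℕ :=
  sInf {a | a ≤ i ∧ Finset.Icc a i ⊆ S}

/-- The right endpoint `b` of the connected component of `i` in `S`. -/
def compMax (S : Finset ℕ) (i : ℕ) : ℕ :=
  sSup {b | i ≤ b ∧ Finset.Icc i b ⊆ S}

/-- One step of the left-right game at the marked element `i`; `e = true` means "left"
(adjoin `a − 1`), `e = false` means "right" (adjoin `b + 1`). -/
def lrStep (i : ℕ) (e : Bool) (S : Finset ℕ) : Finset ℕ :=
  if e then insert (compMin S i - 1) S else insert (compMax S i + 1) S

/-- Running a left-right game from the starting set `S`: the final set `S_r`. -/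
def lrRun : Finset ℕ → List (ℕ × Bool) → Finset ℕ
  | S, [] => S
  | S, (i, e) :: rest => lrRun (lrStep i e S) rest

/-- Validity of a left-right game: a "left" move requires `a − 1 ≥ 1` and a "right"
move requires `b + 1 ≤ n − 1`. -/
def lrValid (n : ℕ) : Finset ℕ → List (ℕ × Bool) → Prop
  | _, [] => True
  | S, (i, e) :: rest =>
      (if e then 2 ≤ compMin S i else compMax S i + 1 ≤ n - 1) ∧
        lrValid n (lrStep i e S) rest

/-- The weight of a left-right game: the product over the steps of
`(b − i + 1)/(b − a + 2)` for a "left" move and `(i − a + 1)/(b − a + 2)` for a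
"right" move. -/
def lrWeight : Finset ℕ → List (ℕ × Bool) → ℚ
  | _, [] => 1
  | S, (i, e) :: rest =>
      (if e then ((compMax S i : ℚ) - (i : ℚ) + 1) / ((compMax S i : ℚ) - (compMin S i : ℚ) + 2)
        else ((i : ℚ) - (compMin S i : ℚ) + 1) / ((compMax S i : ℚ) - (compMin S i : ℚ) + 2)) *
        lrWeight (lrStep i e S) rest

/-- The left-right diagram structure constant
`d_{JK}^L = (m_L/(m_J m_K)) · Σ_{ε ∈ Δ_{JK}^L} wt(ε)`: the sum is over all sequences
`ε` of left/right choices (one for each element of `J ∩ K`, taken in increasing order)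
that are valid and whose final set is `L`. -/
def dLR (n : ℕ) (J K L : Finset ℕ) : ℚ :=
  (mConst L : ℚ) / ((mConst J : ℚ) * (mConst K : ℚ)) *
    ∑ ε : Fin (J ∩ K).card → Bool,
      if lrValid n (J ∪ K) (((J ∩ K).sort (· ≤ ·)).zip (List.ofFn ε)) ∧
          lrRun (J ∪ K) (((J ∩ K).sort (· ≤ ·)).zip (List.ofFn ε)) = L then
        lrWeight (J ∪ K) (((J ∩ K).sort (· ≤ ·)).zip (List.ofFn ε))
      else 0

section CompFacts

variable {S : Finset ℕ} {i : ℕ}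

lemma compMin_mem_set (hi : i ∈ S) :
    compMin S i ∈ {a | a ≤ i ∧ Finset.Icc a i ⊆ S} :=
  Nat.sInf_mem ⟨i, le_refl i, by simp [hi]⟩

lemma compMin_le (hi : i ∈ S) : compMin S i ≤ i := (compMin_mem_set hi).1

lemma Icc_compMin_subset (hi : i ∈ S) : Finset.Icc (compMin S i) i ⊆ S :=
  (compMin_mem_set hi).2

lemma compMin_mem (hi : i ∈ S) : compMin S i ∈ S :=
  Icc_compMin_subset hi (by simp [Finset.mem_Icc, compMin_le hi])

lemma compMin_pred_not_mem (hi : i ∈ S) (h1 : 1 ≤ compMin S i) : compMin S i - 1 ∉ S := by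
  intro hmem
  have hle := compMin_le hi
  have hmemset : compMin S i - 1 ∈ {a | a ≤ i ∧ Finset.Icc a i ⊆ S} := by
    refine ⟨by omega, fun x hx => ?_⟩
    rw [Finset.mem_Icc] at hx
    rcases eq_or_lt_of_le hx.1 with h | h
    · rwa [← h]
    · exact Icc_compMin_subset hi (by rw [Finset.mem_Icc]; omega)
  have := Nat.sInf_le hmemset
  change compMin S i ≤ _ at this
  omega

lemma compMin_eq_zero_of_not_mem (hi : i ∉ S) : compMin S i = 0 := by
  have : {a | a ≤ i ∧ Finset.Icc a i ⊆ S} = ∅ := by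
    ext a
    simp only [Set.mem_setOf_eq, Set.mem_empty_iff_false, iff_false, not_and]
    intro ha hsub
    exact hi (hsub (by rw [Finset.mem_Icc]; omega))
  rw [compMin, this, Nat.sInf_empty]

lemma compMax_bdd : BddAbove {b | i ≤ b ∧ Finset.Icc i b ⊆ S} :=
  S.bddAbove.mono (fun b hb => hb.2 (Finset.mem_Icc.mpr ⟨hb.1, le_refl b⟩))

lemma compMax_mem_set (hi : i ∈ S) :
    compMax S i ∈ {b | i ≤ b ∧ Finset.Icc i b ⊆ S} :=
  Nat.sSup_mem ⟨i, le_refl i, by simp [hi]⟩ compMax_bdd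

lemma le_compMax (hi : i ∈ S) : i ≤ compMax S i := (compMax_mem_set hi).1

lemma Icc_compMax_subset (hi : i ∈ S) : Finset.Icc i (compMax S i) ⊆ S :=
  (compMax_mem_set hi).2

lemma compMax_mem (hi : i ∈ S) : compMax S i ∈ S :=
  Icc_compMax_subset hi (by simp [Finset.mem_Icc, le_compMax hi])

lemma compMax_succ_not_mem (hi : i ∈ S) : compMax S i + 1 ∉ S := by
  intro hmem
  have hle := le_compMax hi
  have hmemset : compMax S i + 1 ∈ {b | i ≤ b ∧ Finset.Icc i b ⊆ S} := by
    refine ⟨by omega, fun x hx => ?_⟩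
    rw [Finset.mem_Icc] at hx
    rcases eq_or_lt_of_le hx.2 with h | h
    · rwa [h]
    · exact Icc_compMax_subset hi (by rw [Finset.mem_Icc]; omega)
  have := le_csSup compMax_bdd hmemset
  change _ ≤ compMax S i at this
  omega

lemma compMax_eq_zero_of_not_mem (hi : i ∉ S) : compMax S i = 0 := by
  have : {b | i ≤ b ∧ Finset.Icc i b ⊆ S} = ∅ := by
    ext b
    simp only [Set.mem_setOf_eq, Set.mem_empty_iff_false, iff_false, not_and]
    intro hb hsub
    exact hi (hsub (by rw [Finset.mem_Icc]; omega))
  rw [compMax, this, csSup_empty]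
  rfl

lemma compMin_pos_mem (h2 : 2 ≤ compMin S i) : i ∈ S := by
  by_contra hi
  rw [compMin_eq_zero_of_not_mem hi] at h2
  omega

lemma Icc_comp_subset (hi : i ∈ S) :
    Finset.Icc (compMin S i) (compMax S i) ⊆ S := by
  intro x hx
  rw [Finset.mem_Icc] at hx
  rcases le_or_gt x i with h | h
  · exact Icc_compMin_subset hi (by rw [Finset.mem_Icc]; exact ⟨hx.1, h⟩)
  · exact Icc_compMax_subset hi (by rw [Finset.mem_Icc]; exact ⟨le_of_lt h, hx.2⟩)

end CompFacts

section Harmonic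

variable {R : Type*} [CommRing R] [Algebra ℚ R]

lemma harmonic_interp (m : ℕ) (p : ℕ → R)
    (h : ∀ k, k + 2 ≤ m → p k + p (k + 2) = 2 * p (k + 1)) :
    ∀ k, k ≤ m → (m : ℚ) • p k = ((m : ℚ) - (k : ℚ)) • p 0 + (k : ℚ) • p m := by
  have hd : ∀ k, k + 1 ≤ m → p (k + 1) - p k = p 1 - p 0 := by
    intro k
    induction k with
    | zero => intro _; simp
    | succ k ih =>
      intro hk
      have h1 := h k (by omega)
      have h2 := ih (by omega)
      linear_combination h1 + h2
  have hp : ∀ k, k ≤ m → p k = p 0 + algebraMap ℚ R k * (p 1 - p 0) := by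
    intro k
    induction k with
    | zero => intro _; simp
    | succ k ih =>
      intro hk
      have h2 := hd k (by omega)
      have h3 := ih (by omega)
      have hc : ((k + 1 : ℕ) : ℚ) = (k : ℚ) + 1 := by push_cast; ring
      rw [hc, map_add, map_one]
      linear_combination h2 + h3
  intro k hk
  have h1 := hp k hk
  have h2 := hp m le_rfl
  rw [Algebra.smul_def, Algebra.smul_def, Algebra.smul_def, map_sub]
  linear_combination (algebraMap ℚ R m) * h1 - (algebraMap ℚ R k) * h2

end Harmonic

section Main

variable {R : Type*} [CommRing R] [Algebra ℚ R] {n : ℕ} {ϖ : ℕ → R}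

lemma prod_insert_zero {S : Finset ℕ} (x : ℕ) (h : ∏ j ∈ S, ϖ j = 0) :
    ∏ j ∈ insert x S, ϖ j = 0 := by
  by_cases hx : x ∈ S
  · rwa [Finset.insert_eq_self.mpr hx]
  · rw [Finset.prod_insert hx, h, mul_zero]

lemma prod_lrStep_zero {S : Finset ℕ} (i : ℕ) (e : Bool) (h : ∏ j ∈ S, ϖ j = 0) :
    ∏ j ∈ lrStep i e S, ϖ j = 0 := by
  cases e <;> simp only [lrStep, if_true, if_false, Bool.false_eq_true] <;>
    exact prod_insert_zero _ h

lemma run_zero (ms : List (ℕ × Bool)) : ∀ S : Finset ℕ, (∏ j ∈ S, ϖ j = 0) →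
    ∏ j ∈ lrRun S ms, ϖ j = 0 := by
  induction ms with
  | nil => intro S h; exact h
  | cons m rest ih =>
    intro S h
    obtain ⟨i, e⟩ := m
    exact ih _ (prod_lrStep_zero i e h)

lemma string_step (hn : 2 ≤ n) (h0 : ϖ 0 = 0) (htop : ϖ n = 0)
    (hrel : ∀ i : ℕ, 1 ≤ i → i ≤ n - 1 → ϖ i * (2 * ϖ i - ϖ (i - 1) - ϖ (i + 1)) = 0)
    {S : Finset ℕ} (hS : S ⊆ Finset.Icc 1 (n - 1)) {i : ℕ} (hi : i ∈ S) :
    ϖ i * ∏ j ∈ S, ϖ j =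
      (((compMax S i : ℚ) - (i : ℚ) + 1) / ((compMax S i : ℚ) - (compMin S i : ℚ) + 2)) •
          ∏ j ∈ lrStep i true S, ϖ j +
        (((i : ℚ) - (compMin S i : ℚ) + 1) / ((compMax S i : ℚ) - (compMin S i : ℚ) + 2)) •
          ∏ j ∈ lrStep i false S, ϖ j := by
  set a := compMin S i with ha
  set b := compMax S i with hb
  have hai : a ≤ i := compMin_le hi
  have hib : i ≤ b := le_compMax hi
  have haS : a ∈ S := compMin_mem hi
  have hbS : b ∈ S := compMax_mem hi
  have ha1 : 1 ≤ a := (Finset.mem_Icc.mp (hS haS)).1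
  have hb1 : b ≤ n - 1 := (Finset.mem_Icc.mp (hS hbS)).2
  have hanm : a - 1 ∉ S := compMin_pred_not_mem hi ha1
  have hbnm : b + 1 ∉ S := compMax_succ_not_mem hi
  have hcomp : Finset.Icc a b ⊆ S := Icc_comp_subset hi
  set p : ℕ → R := fun k => ϖ (a - 1 + k) * ∏ j ∈ S, ϖ j with hp
  have hharm := harmonic_interp (b - a + 2) p ?_ (i - a + 1) (by omega)
  · -- use the interpolation
    have e1 : a - 1 + (i - a + 1) = i := by omega
    have e2 : a - 1 + (b - a + 2) = b + 1 := by omega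
    have hp1 : p (i - a + 1) = ϖ i * ∏ j ∈ S, ϖ j := by rw [hp]; simp only [e1]
    have hp0 : p 0 = ∏ j ∈ lrStep i true S, ϖ j := by
      rw [hp]
      simp only [add_zero, lrStep, if_true]
      rw [Finset.prod_insert hanm]
    have hpm : p (b - a + 2) = ∏ j ∈ lrStep i false S, ϖ j := by
      rw [hp]
      simp only [e2, lrStep, Bool.false_eq_true, if_false]
      rw [Finset.prod_insert hbnm]
    rw [hp1, hp0, hpm] at hharm
    have hcm : ((b - a + 2 : ℕ) : ℚ) = (b : ℚ) - (a : ℚ) + 2 := by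
      have : a ≤ b := hai.trans hib
      push_cast [this]
      ring
    have hck : ((i - a + 1 : ℕ) : ℚ) = (i : ℚ) - (a : ℚ) + 1 := by
      push_cast [hai]
      ring
    rw [hcm, hck] at hharm
    have hstep : ((b : ℚ) - (a : ℚ) + 2) - ((i : ℚ) - (a : ℚ) + 1) = (b : ℚ) - (i : ℚ) + 1 := by
      ring
    rw [hstep] at hharm
    have hne : ((b : ℚ) - (a : ℚ) + 2) ≠ 0 := by
      have h1 : (a : ℚ) ≤ (b : ℚ) := by exact_mod_cast hai.trans hib
      intro hcon; nlinarith
    have := congrArg (fun x : R => (((b : ℚ) - (a : ℚ) + 2)⁻¹ : ℚ) • x) hharm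
    simp only [smul_add, smul_smul] at this
    rw [inv_mul_cancel₀ hne, one_smul] at this
    rw [this]
    congr 1
    · congr 1
      field_simp
    · congr 1
      field_simp
  · -- harmonicity
    intro k hk
    have hjS : a + k ∈ S := hcomp (Finset.mem_Icc.mpr ⟨by omega, by omega⟩)
    have hj1 : 1 ≤ a + k := by omega
    have hjn : a + k ≤ n - 1 := (Finset.mem_Icc.mp (hS hjS)).2
    have hrelj := hrel (a + k) hj1 hjn
    have hE := (Finset.mul_prod_erase S ϖ hjS).symm
    have e1 : a - 1 + k = a + k - 1 := by omega
    have e2 : a - 1 + (k + 2) = a + k + 1 := by omega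
    have e3 : a - 1 + (k + 1) = a + k := by omega
    rw [hp]
    simp only [e1, e2, e3]
    rw [hE]
    linear_combination (-(∏ x ∈ S.erase (a + k), ϖ x)) * hrelj

lemma step_eq (hn : 2 ≤ n) (h0 : ϖ 0 = 0) (htop : ϖ n = 0)
    (hrel : ∀ i : ℕ, 1 ≤ i → i ≤ n - 1 → ϖ i * (2 * ϖ i - ϖ (i - 1) - ϖ (i + 1)) = 0)
    {S : Finset ℕ} (hS : S ⊆ Finset.Icc 1 (n - 1) ∨ ∏ j ∈ S, ϖ j = 0) {i : ℕ} (hi : i ∈ S) :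
    ϖ i * ∏ j ∈ S, ϖ j =
      (((compMax S i : ℚ) - (i : ℚ) + 1) / ((compMax S i : ℚ) - (compMin S i : ℚ) + 2)) •
          ∏ j ∈ lrStep i true S, ϖ j +
        (((i : ℚ) - (compMin S i : ℚ) + 1) / ((compMax S i : ℚ) - (compMin S i : ℚ) + 2)) •
          ∏ j ∈ lrStep i false S, ϖ j := by
  rcases hS with hS | hS
  · exact string_step hn h0 htop hrel hS hi
  · rw [hS, prod_lrStep_zero i true hS, prod_lrStep_zero i false hS]
    simp

lemma good_step (hn : 2 ≤ n) (h0 : ϖ 0 = 0) (htop : ϖ n = 0)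
    {S : Finset ℕ} (hS : S ⊆ Finset.Icc 1 (n - 1) ∨ ∏ j ∈ S, ϖ j = 0) (i : ℕ) (e : Bool) :
    lrStep i e S ⊆ Finset.Icc 1 (n - 1) ∨ ∏ j ∈ lrStep i e S, ϖ j = 0 := by
  rcases hS with hS | hS
  · -- S inside the interval
    cases e
    · -- right move: insert compMax + 1
      simp only [lrStep, Bool.false_eq_true, if_false]
      by_cases hiS : i ∈ S
      · have hmem := compMax_mem (S := S) hiS
        have hle : compMax S i ≤ n - 1 := (Finset.mem_Icc.mp (hS hmem)).2
        rcases eq_or_lt_of_le hle with h | h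
        · -- inserting n : product vanishes
          right
          have hnot : compMax S i + 1 ∉ S := compMax_succ_not_mem hiS
          rw [Finset.prod_insert hnot]
          have : compMax S i + 1 = n := by omega
          rw [this, htop, zero_mul]
        · left
          exact Finset.insert_subset (Finset.mem_Icc.mpr ⟨by omega, by omega⟩) hS
      · have hz : compMax S i = 0 := compMax_eq_zero_of_not_mem hiS
        left
        exact Finset.insert_subset (Finset.mem_Icc.mpr ⟨by omega, by omega⟩) hS
    · -- left move: insert compMin - 1
      simp only [lrStep, if_true]
      by_cases h2 : 2 ≤ compMin S i
      · have hiS : i ∈ S := compMin_pos_mem h2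
        have hmem := compMin_mem (S := S) hiS
        have hle : compMin S i ≤ n - 1 := (Finset.mem_Icc.mp (hS hmem)).2
        left
        exact Finset.insert_subset (Finset.mem_Icc.mpr ⟨by omega, by omega⟩) hS
      · -- inserting 0 : product vanishes
        right
        have h0' : compMin S i - 1 = 0 := by omega
        have hnot : (0 : ℕ) ∉ S := fun hmem => by
          have := (Finset.mem_Icc.mp (hS hmem)).1; omega
        rw [h0']
        rw [Finset.prod_insert hnot, h0, zero_mul]
  · right
    exact prod_lrStep_zero i e hS

lemma master (hn : 2 ≤ n) (h0 : ϖ 0 = 0) (htop : ϖ n = 0)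
    (hrel : ∀ i : ℕ, 1 ≤ i → i ≤ n - 1 → ϖ i * (2 * ϖ i - ϖ (i - 1) - ϖ (i + 1)) = 0)
    (l : List ℕ) : ∀ S : Finset ℕ, (∀ i ∈ l, i ∈ S) →
    (S ⊆ Finset.Icc 1 (n - 1) ∨ ∏ j ∈ S, ϖ j = 0) →
    (l.map ϖ).prod * ∏ j ∈ S, ϖ j =
      ∑ ε : Fin l.length → Bool,
        lrWeight S (l.zip (List.ofFn ε)) • ∏ j ∈ lrRun S (l.zip (List.ofFn ε)), ϖ j := by
  induction l with
  | nil =>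
    intro S _ _
    rw [show (List.nil : List ℕ).length = 0 from rfl, Fintype.sum_unique]
    simp [lrWeight, lrRun]
  | cons i l ih =>
    intro S hmem hgood
    have hiS : i ∈ S := hmem i (List.mem_cons_self)
    -- reindex the sum
    simp only [List.length_cons]
    rw [← Equiv.sum_comp (Fin.consEquiv (fun _ => Bool)), Fintype.sum_prod_type]
    have hofn : ∀ (e : Bool) (ε : Fin l.length → Bool),
        List.ofFn ((Fin.consEquiv (fun _ => Bool)) (e, ε)) = e :: List.ofFn ε := by
      intro e ε
      rw [List.ofFn_succ]
      simp [Fin.consEquiv]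
    simp only [hofn, List.zip_cons_cons]
    have hw : ∀ (e : Bool) (ε : Fin l.length → Bool),
        lrWeight S ((i, e) :: l.zip (List.ofFn ε)) =
          (if e then ((compMax S i : ℚ) - (i : ℚ) + 1) / ((compMax S i : ℚ) - (compMin S i : ℚ) + 2)
            else ((i : ℚ) - (compMin S i : ℚ) + 1) / ((compMax S i : ℚ) - (compMin S i : ℚ) + 2)) *
            lrWeight (lrStep i e S) (l.zip (List.ofFn ε)) := by intro e ε; rfl
    have hr : ∀ (e : Bool) (ε : Fin l.length → Bool),
        lrRun S ((i, e) :: l.zip (List.ofFn ε)) = lrRun (lrStep i e S) (l.zip (List.ofFn ε)) := by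
      intro e ε; rfl
    simp only [hw, hr, mul_smul]
    rw [Fintype.sum_bool]
    simp only [if_true, Bool.false_eq_true, if_false]
    rw [← Finset.smul_sum, ← Finset.smul_sum]
    rw [← ih (lrStep i true S) (fun j hj => Finset.mem_insert_of_mem (hmem j (List.mem_cons_of_mem i hj)))
        (good_step hn h0 htop hgood i true),
      ← ih (lrStep i false S) (fun j hj => Finset.mem_insert_of_mem (hmem j (List.mem_cons_of_mem i hj)))
        (good_step hn h0 htop hgood i false)]
    rw [List.map_cons, List.prod_cons, mul_comm (ϖ i), mul_assoc,
      step_eq hn h0 htop hrel hgood hiS, mul_add, mul_smul_comm, mul_smul_comm]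

end Main

section Comb

variable {R : Type*} [CommRing R] [Algebra ℚ R] {n : ℕ} {ϖ : ℕ → R}

lemma subset_lrStep (S : Finset ℕ) (i : ℕ) (e : Bool) : S ⊆ lrStep i e S := by
  cases e <;> simp only [lrStep, if_true, Bool.false_eq_true, if_false] <;>
    exact Finset.subset_insert _ _

lemma subset_lrRun (ms : List (ℕ × Bool)) : ∀ S : Finset ℕ, S ⊆ lrRun S ms := by
  induction ms with
  | nil => intro S; exact le_refl S
  | cons m rest ih =>
    intro S
    obtain ⟨i, e⟩ := m
    exact (subset_lrStep S i e).trans (ih _)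

lemma valid_lrStep_subset (hn : 2 ≤ n) {S : Finset ℕ} (hS : S ⊆ Finset.Icc 1 (n - 1))
    {i : ℕ} {e : Bool} (hc : if e then 2 ≤ compMin S i else compMax S i + 1 ≤ n - 1) :
    lrStep i e S ⊆ Finset.Icc 1 (n - 1) := by
  cases e
  · simp only [Bool.false_eq_true, if_false] at hc
    simp only [lrStep, Bool.false_eq_true, if_false]
    exact Finset.insert_subset (Finset.mem_Icc.mpr ⟨by omega, hc⟩) hS
  · simp only [if_true] at hc
    simp only [lrStep, if_true]
    have hiS : i ∈ S := compMin_pos_mem hc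
    have hmem := compMin_mem (S := S) hiS
    have hle : compMin S i ≤ n - 1 := (Finset.mem_Icc.mp (hS hmem)).2
    exact Finset.insert_subset (Finset.mem_Icc.mpr ⟨by omega, by omega⟩) hS

lemma valid_run_Icc (hn : 2 ≤ n) (ms : List (ℕ × Bool)) :
    ∀ S : Finset ℕ, lrValid n S ms → S ⊆ Finset.Icc 1 (n - 1) →
      lrRun S ms ⊆ Finset.Icc 1 (n - 1) := by
  induction ms with
  | nil => intro S _ hS; exact hS
  | cons m rest ih =>
    intro S hv hS
    obtain ⟨i, e⟩ := m
    obtain ⟨hc, hrest⟩ := hv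
    exact ih _ hrest (valid_lrStep_subset hn hS hc)

lemma valid_card (hn : 2 ≤ n) (ms : List (ℕ × Bool)) :
    ∀ S : Finset ℕ, lrValid n S ms → S ⊆ Finset.Icc 1 (n - 1) →
      (∀ m ∈ ms, m.1 ∈ S) → (lrRun S ms).card = S.card + ms.length := by
  induction ms with
  | nil => intro S _ _ _; simp [lrRun]
  | cons m rest ih =>
    intro S hv hS hmark
    obtain ⟨i, e⟩ := m
    obtain ⟨hc, hrest⟩ := hv
    have hiS : i ∈ S := hmark (i, e) List.mem_cons_self
    have hnot : (if e then compMin S i - 1 else compMax S i + 1) ∉ S := by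
      cases e
      · simp only [Bool.false_eq_true, if_false]
        exact compMax_succ_not_mem hiS
      · simp only [if_true] at hc ⊢
        exact compMin_pred_not_mem hiS (by omega)
    have hstep : lrStep i e S = insert (if e then compMin S i - 1 else compMax S i + 1) S := by
      cases e <;> simp [lrStep]
    have hcard : (lrStep i e S).card = S.card + 1 := by
      rw [hstep, Finset.card_insert_of_notMem hnot]
    have hrun := ih (lrStep i e S) hrest (valid_lrStep_subset hn hS hc)
      (fun m hm => subset_lrStep S i e (hmark m (List.mem_cons_of_mem _ hm)))
    change (lrRun (lrStep i e S) rest).card = _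
    rw [hrun, hcard, List.length_cons]
    omega

lemma invalid_zero (hn : 2 ≤ n) (h0 : ϖ 0 = 0) (htop : ϖ n = 0)
    (ms : List (ℕ × Bool)) :
    ∀ S : Finset ℕ, (S ⊆ Finset.Icc 1 (n - 1) ∨ ∏ j ∈ S, ϖ j = 0) →
      ¬ lrValid n S ms → ∏ j ∈ lrRun S ms, ϖ j = 0 := by
  induction ms with
  | nil => intro S _ hv; exact absurd trivial hv
  | cons m rest ih =>
    intro S hgood hv
    obtain ⟨i, e⟩ := m
    by_cases hc : if e then 2 ≤ compMin S i else compMax S i + 1 ≤ n - 1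
    · have hrest : ¬ lrValid n (lrStep i e S) rest := fun h => hv ⟨hc, h⟩
      exact ih _ (good_step hn h0 htop hgood i e) hrest
    · -- the step itself produces a vanishing product
      change ∏ j ∈ lrRun (lrStep i e S) rest, ϖ j = 0
      apply run_zero
      rcases hgood with hS | hS
      · cases e
        · simp only [Bool.false_eq_true, if_false] at hc
          push_neg at hc
          by_cases hiS : i ∈ S
          · have hmem := compMax_mem (S := S) hiS
            have hle : compMax S i ≤ n - 1 := (Finset.mem_Icc.mp (hS hmem)).2
            have heq : compMax S i + 1 = n := by omega
            have hnot : compMax S i + 1 ∉ S := compMax_succ_not_mem hiS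
            simp only [lrStep, Bool.false_eq_true, if_false]
            rw [Finset.prod_insert hnot, heq, htop, zero_mul]
          · have hz : compMax S i = 0 := compMax_eq_zero_of_not_mem hiS
            omega
        · simp only [if_true] at hc
          push_neg at hc
          have h0' : compMin S i - 1 = 0 := by omega
          have hnot : (0 : ℕ) ∉ S := fun hmem => by
            have := (Finset.mem_Icc.mp (hS hmem)).1; omega
          simp only [lrStep, if_true, h0']
          rw [Finset.prod_insert hnot, h0, zero_mul]
      · exact prod_lrStep_zero i e hS

lemma mConst_pos (J : Finset ℕ) : 0 < mConst J :=
  Finset.prod_pos (fun _ _ => Nat.factorial_pos _)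

end Comb

/-- Let `n ≥ 2`, `R` a commutative `ℚ`-algebra, and `ϖ_1, …, ϖ_{n-1} ∈ R`
satisfying the Peterson relations, with `ϖ_0 = ϖ_n = 0`.  For `J ⊆ {1,…,n-1}` set
`ϖ_J := (1/m_J) ∏_{i∈J} ϖ_i`.  Then for all `J, K ⊆ {1,…,n-1}`:
`ϖ_J · ϖ_K = Σ_{L ⊆ {1,…,n-1}} d_{JK}^L · ϖ_L`, where `d_{JK}^L` is the left-right
diagram structure constant; moreover `d_{JK}^L = 0` unless `J ∪ K ⊆ L` and
`|L| = |J| + |K|`. -/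
theorem peterson_basis_structure_constants (n : ℕ) (hn : 2 ≤ n)
    {R : Type*} [CommRing R] [Algebra ℚ R] (ϖ : ℕ → R)
    (h0 : ϖ 0 = 0) (htop : ϖ n = 0)
    (hrel : ∀ i : ℕ, 1 ≤ i → i ≤ n - 1 → ϖ i * (2 * ϖ i - ϖ (i - 1) - ϖ (i + 1)) = 0)
    (J K : Finset ℕ) (hJ : J ⊆ Finset.Icc 1 (n - 1)) (hK : K ⊆ Finset.Icc 1 (n - 1)) :
    (((mConst J : ℚ))⁻¹ • ∏ i ∈ J, ϖ i) * (((mConst K : ℚ))⁻¹ • ∏ i ∈ K, ϖ i) =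
      (∑ L ∈ (Finset.Icc 1 (n - 1)).powerset,
        dLR n J K L • (((mConst L : ℚ))⁻¹ • ∏ i ∈ L, ϖ i)) ∧
    ∀ L : Finset ℕ, ¬(J ∪ K ⊆ L ∧ L.card = J.card + K.card) → dLR n J K L = 0 := by
  have hunion : J ∪ K ⊆ Finset.Icc 1 (n - 1) := Finset.union_subset hJ hK
  set l := (J ∩ K).sort (· ≤ ·) with hl
  have hlen : l.length = (J ∩ K).card := Finset.length_sort _
  have hmem : ∀ i ∈ l, i ∈ J ∪ K := fun i hi =>
    Finset.mem_union_left K (Finset.mem_inter.mp ((Finset.mem_sort _).mp hi)).1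
  constructor
  · -- main identity
    have hprodl : (l.map ϖ).prod = ∏ j ∈ J ∩ K, ϖ j := by
      rw [← Finset.prod_map_toList]
      exact List.Perm.prod_eq (List.Perm.map ϖ (Finset.sort_perm_toList (J ∩ K) _))
    have key := master hn h0 htop hrel l (J ∪ K) hmem (Or.inl hunion)
    rw [hlen] at key
    have key2 : (l.map ϖ).prod * ∏ j ∈ J ∪ K, ϖ j =
        ∑ L ∈ (Finset.Icc 1 (n - 1)).powerset, ∑ ε : Fin (J ∩ K).card → Bool,
          (if lrValid n (J ∪ K) (l.zip (List.ofFn ε)) ∧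
              lrRun (J ∪ K) (l.zip (List.ofFn ε)) = L
            then lrWeight (J ∪ K) (l.zip (List.ofFn ε)) else 0) • ∏ j ∈ L, ϖ j := by
      rw [key, Finset.sum_comm]
      apply Finset.sum_congr rfl
      intro ε _
      by_cases hv : lrValid n (J ∪ K) (l.zip (List.ofFn ε))
      · have hrun : lrRun (J ∪ K) (l.zip (List.ofFn ε)) ∈ (Finset.Icc 1 (n - 1)).powerset :=
          Finset.mem_powerset.mpr (valid_run_Icc hn _ _ hv hunion)
        rw [Finset.sum_eq_single (lrRun (J ∪ K) (l.zip (List.ofFn ε)))]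
        · rw [if_pos ⟨hv, rfl⟩]
        · intro L _ hne
          rw [if_neg (fun h => hne h.2.symm), zero_smul]
        · intro habs; exact absurd hrun habs
      · rw [invalid_zero hn h0 htop _ _ (Or.inl hunion) hv, smul_zero]
        symm
        apply Finset.sum_eq_zero
        intro L _
        rw [if_neg (fun h => hv h.1), zero_smul]
    have hJ0 : (mConst J : ℚ) ≠ 0 := by exact_mod_cast (mConst_pos J).ne'
    have hK0 : (mConst K : ℚ) ≠ 0 := by exact_mod_cast (mConst_pos K).ne'
    rw [smul_mul_smul_comm, show (∏ i ∈ J, ϖ i) * ∏ i ∈ K, ϖ i =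
        (∏ j ∈ J ∩ K, ϖ j) * ∏ j ∈ J ∪ K, ϖ j from by
          rw [mul_comm (∏ j ∈ J ∩ K, ϖ j), Finset.prod_union_inter],
      ← hprodl, key2, Finset.smul_sum]
    simp only [dLR, ← hl]
    apply Finset.sum_congr rfl
    intro L _
    have hL0 : (mConst L : ℚ) ≠ 0 := by exact_mod_cast (mConst_pos L).ne'
    rw [← Finset.sum_smul, smul_smul, smul_smul]
    congr 1
    field_simp
  · -- support of the structure constants
    intro L hL
    simp only [dLR, ← hl]
    rw [Finset.sum_eq_zero, mul_zero]
    intro ε _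
    apply if_neg
    rintro ⟨hv, hrun⟩
    apply hL
    constructor
    · rw [← hrun]; exact subset_lrRun _ _
    · have hzl : (l.zip (List.ofFn ε)).length = (J ∩ K).card := by
        rw [List.length_zip, List.length_ofFn, hlen, min_self]
      have hmk : ∀ m ∈ l.zip (List.ofFn ε), m.1 ∈ J ∪ K := by
        intro m hm
        exact hmem m.1 (List.of_mem_zip hm).1
      have hcards := valid_card hn _ _ hv hunion hmk
      rw [hrun, hzl] at hcards
      have hcui := Finset.card_union_add_card_inter J K
      omega
end
end

section
/- Let n ≥ 2, let R be a commutative ℚ-algebra, and let ϖ_1,…,ϖ_{n−1} ∈ R satisfy the Peterson relations, with ϖ_0 = ϖ_n = 0. Then for all J, K ⊆ {1,…,n−1} there exist nonnegative rational numbers c_L, indexed by the subsets L with J ∪ K ⊆ L ⊆ {1,…,n−1} and |L| = |J| + |K|, such that (∏_{j∈J} ϖ_j)·(∏_{k∈K} ϖ_k) = Σ_L c_L · ∏_{i∈L} ϖ_i. In particular, the product of any two square-free monomials in the ϖ_i is a nonnegative rational linear combination of square-free monomials. -/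
open Finset

section Peterson

variable (n : ℕ) {R : Type*} [CommRing R] [Algebra ℚ R] (ϖ : ℕ → R)

/-- Core: if `j ∈ L ⊆ Icc 1 (n-1)` then `2 ϖ_j ∏_L = ϖ_{j-1} ∏_L + ϖ_{j+1} ∏_L`. -/
lemma pet_core
    (hrel : ∀ i : ℕ, 1 ≤ i → i ≤ n - 1 → ϖ i * (2 * ϖ i - ϖ (i - 1) - ϖ (i + 1)) = 0)
    (L : Finset ℕ) (hL : L ⊆ Finset.Icc 1 (n - 1)) {j : ℕ} (hj : j ∈ L) :
    2 * (ϖ j * ∏ i ∈ L, ϖ i) =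
      ϖ (j - 1) * ∏ i ∈ L, ϖ i + ϖ (j + 1) * ∏ i ∈ L, ϖ i := by
  obtain ⟨hj1, hj2⟩ := Finset.mem_Icc.mp (hL hj)
  have hsq : 2 * (ϖ j * ϖ j) = ϖ (j-1) * ϖ j + ϖ (j+1) * ϖ j := by
    have := hrel j hj1 hj2
    ring_nf at this ⊢
    linear_combination this
  rw [← Finset.mul_prod_erase L ϖ hj]
  calc 2 * (ϖ j * (ϖ j * ∏ i ∈ L.erase j, ϖ i))
      = (2 * (ϖ j * ϖ j)) * ∏ i ∈ L.erase j, ϖ i := by ring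
    _ = (ϖ (j-1) * ϖ j + ϖ (j+1) * ϖ j) * ∏ i ∈ L.erase j, ϖ i := by rw [hsq]
    _ = _ := by ring

end Peterson

section Peterson2
variable (n : ℕ) {R : Type*} [CommRing R] [Algebra ℚ R] (ϖ : ℕ → R)

lemma pet_diff
    (hrel : ∀ i : ℕ, 1 ≤ i → i ≤ n - 1 → ϖ i * (2 * ϖ i - ϖ (i - 1) - ϖ (i + 1)) = 0)
    (L : Finset ℕ) (hL : L ⊆ Finset.Icc 1 (n - 1)) (a : ℕ) (ha : 1 ≤ a) :
    ∀ m : ℕ, (∀ t ≤ m, a + t ∈ L) →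
      ϖ (a+m+1) * ∏ i ∈ L, ϖ i - ϖ (a+m) * ∏ i ∈ L, ϖ i =
        ϖ a * ∏ i ∈ L, ϖ i - ϖ (a-1) * ∏ i ∈ L, ϖ i := by
  intro m
  induction m with
  | zero =>
    intro h
    have hc := pet_core n ϖ hrel L hL (h 0 le_rfl)
    simp only [Nat.add_zero] at hc ⊢
    linear_combination -hc
  | succ m ih =>
    intro h
    have hc := pet_core n ϖ hrel L hL (h (m+1) le_rfl)
    have hsub : a + (m+1) - 1 = a + m := by omega
    rw [hsub] at hc
    have ih' := ih (fun t ht => h t (by omega))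
    have : a + (m+1) + 1 = a + m + 1 + 1 := by ring
    rw [this]
    have : a + (m+1) = a + m + 1 := by ring
    rw [this] at hc ⊢
    linear_combination -hc + ih'

lemma pet_linear
    (hrel : ∀ i : ℕ, 1 ≤ i → i ≤ n - 1 → ϖ i * (2 * ϖ i - ϖ (i - 1) - ϖ (i + 1)) = 0)
    (L : Finset ℕ) (hL : L ⊆ Finset.Icc 1 (n - 1)) (a : ℕ) (ha : 1 ≤ a) :
    ∀ m : ℕ, (∀ t < m, a + t ∈ L) →
      ϖ (a+m) * ∏ i ∈ L, ϖ i =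
        ϖ (a-1) * ∏ i ∈ L, ϖ i +
          ((m:R)+1) * (ϖ a * ∏ i ∈ L, ϖ i - ϖ (a-1) * ∏ i ∈ L, ϖ i) := by
  intro m
  induction m with
  | zero => intro _; simp
  | succ m ih =>
    intro h
    have hd := pet_diff n ϖ hrel L hL a ha m (fun t ht => h t (by omega))
    have ih' := ih (fun t ht => h t (by omega))
    have : a + (m+1) = a + m + 1 := by ring
    rw [this]
    push_cast
    linear_combination hd + ih'

end Peterson2

section Peterson3
variable (n : ℕ) {R : Type*} [CommRing R] [Algebra ℚ R] (ϖ : ℕ → R)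

lemma pet_twoPoint
    (hrel : ∀ i : ℕ, 1 ≤ i → i ≤ n - 1 → ϖ i * (2 * ϖ i - ϖ (i - 1) - ϖ (i + 1)) = 0)
    (L : Finset ℕ) (hL : L ⊆ Finset.Icc 1 (n - 1)) (a s m : ℕ) (ha : 1 ≤ a)
    (hs : s < m) (hrun : ∀ t < m, a + t ∈ L) :
    ϖ (a+s) * ∏ i ∈ L, ϖ i =
      (((m:ℚ)-s)/(m+1)) • (ϖ (a-1) * ∏ i ∈ L, ϖ i) +
      (((s:ℚ)+1)/(m+1)) • (ϖ (a+m) * ∏ i ∈ L, ϖ i) := by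
  have lin_m := pet_linear n ϖ hrel L hL a ha m hrun
  have lin_s := pet_linear n ϖ hrel L hL a ha s (fun t ht => hrun t (ht.trans hs))
  have hR : ((m:R)+1) * (ϖ (a+s) * ∏ i ∈ L, ϖ i) =
      ((m:R)-(s:R)) * (ϖ (a-1) * ∏ i ∈ L, ϖ i) +
      ((s:R)+1) * (ϖ (a+m) * ∏ i ∈ L, ϖ i) := by
    linear_combination ((m:R)+1) * lin_s - ((s:R)+1) * lin_m
  set e : R := algebraMap ℚ R (((m:ℚ)+1)⁻¹) with he_def
  have hm0 : ((m:ℚ)+1) ≠ 0 := by positivity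
  have he : e * ((m:R)+1) = 1 := by
    rw [he_def]
    have : ((m:R)+1) = algebraMap ℚ R ((m:ℚ)+1) := by
      simp [map_add, map_natCast]
    rw [this, ← map_mul, inv_mul_cancel₀ hm0, map_one]
  have c1 : (((m:ℚ)-s)/(m+1)) • (ϖ (a-1) * ∏ i ∈ L, ϖ i) =
      ((m:R)-(s:R)) * e * (ϖ (a-1) * ∏ i ∈ L, ϖ i) := by
    rw [Algebra.smul_def, div_eq_mul_inv, map_mul]
    congr 2
    simp [map_sub, map_natCast]
  have c2 : (((s:ℚ)+1)/(m+1)) • (ϖ (a+m) * ∏ i ∈ L, ϖ i) =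
      ((s:R)+1) * e * (ϖ (a+m) * ∏ i ∈ L, ϖ i) := by
    rw [Algebra.smul_def, div_eq_mul_inv, map_mul]
    congr 2
    simp [map_add, map_natCast]
  rw [c1, c2]
  linear_combination e * hR - (ϖ (a+s) * ∏ i ∈ L, ϖ i) * he

end Peterson3

section Peterson4
variable (n : ℕ) {R : Type*} [CommRing R] [Algebra ℚ R] (ϖ : ℕ → R)

lemma pet_step (h0 : ϖ 0 = 0) (htop : ϖ n = 0)
    (hrel : ∀ i : ℕ, 1 ≤ i → i ≤ n - 1 → ϖ i * (2 * ϖ i - ϖ (i - 1) - ϖ (i + 1)) = 0)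
    (k : ℕ) (hk : k ∈ Finset.Icc 1 (n - 1))
    (L : Finset ℕ) (hL : L ⊆ Finset.Icc 1 (n - 1)) :
    ∃ d : Finset ℕ → ℚ, (∀ L', 0 ≤ d L') ∧
      ϖ k * ∏ i ∈ L, ϖ i =
        ∑ L' ∈ (Finset.Icc 1 (n - 1)).powerset.filter
            (fun L' => insert k L ⊆ L' ∧ L'.card = L.card + 1),
          d L' • ∏ i ∈ L', ϖ i := by
  obtain ⟨hk1, hk2⟩ := Finset.mem_Icc.mp hk
  have h0L : (0 : ℕ) ∉ L := fun h => by simpa using Finset.mem_Icc.mp (hL h)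
  by_cases hkL : k ∈ L
  · -- the interesting case: k ∈ L
    have hex1 : ∃ t, k - t ∉ L := ⟨k, by simpa using h0L⟩
    have hex2 : ∃ t, k + t ∉ L := ⟨n, fun h => by
      have := Finset.mem_Icc.mp (hL h); omega⟩
    set u := Nat.find hex1 with hu_def
    set v := Nat.find hex2 with hv_def
    have hu_spec : k - u ∉ L := Nat.find_spec hex1
    have hv_spec : k + v ∉ L := Nat.find_spec hex2
    have hu_min : ∀ t < u, k - t ∈ L := fun t ht => by
      by_contra h; exact absurd (Nat.find_min' hex1 h) (by omega)
    have hv_min : ∀ t < v, k + t ∈ L := fun t ht => by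
      by_contra h; exact absurd (Nat.find_min' hex2 h) (by omega)
    have hu1 : 1 ≤ u := by
      rcases Nat.eq_zero_or_pos u with h | h
      · exfalso; apply hu_spec ; rw [h]; simpa using hkL
      · exact h
    have hv1 : 1 ≤ v := by
      rcases Nat.eq_zero_or_pos v with h | h
      · exfalso; apply hv_spec; rw [h]; simpa using hkL
      · exact h
    have huk : u ≤ k := Nat.find_min' hex1 (by simpa using h0L)
    have hvn : k + v ≤ n := by
      have := hv_min (v - 1) (by omega)
      have := Finset.mem_Icc.mp (hL this)
      omega
    -- set up the run
    set a := k - u + 1 with ha_def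
    set s := u - 1 with hs_def
    set m := u + v - 1 with hm_def
    have ha1 : 1 ≤ a := by omega
    have has : a + s = k := by omega
    have ham : a + m = k + v := by omega
    have ha1' : a - 1 = k - u := by omega
    have hsm : s < m := by omega
    have hrun : ∀ t < m, a + t ∈ L := by
      intro t ht
      rcases le_or_gt (a + t) k with h | h
      · have h2 := hu_min (k - (a + t)) (by omega)
        rwa [show k - (k - (a + t)) = a + t by omega] at h2
      · have h2 := hv_min ((a + t) - k) (by omega)
        rwa [show k + ((a + t) - k) = a + t by omega] at h2
    have htp := pet_twoPoint n ϖ hrel L hL a s m ha1 hsm hrun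
    rw [has, ham, ha1'] at htp
    set c1 : ℚ := ((m:ℚ)-s)/(m+1) with hc1_def
    set c2 : ℚ := ((s:ℚ)+1)/(m+1) with hc2_def
    have hc1 : 0 ≤ c1 := by
      apply div_nonneg _ (by positivity)
      have : (s:ℚ) ≤ (m:ℚ) := by exact_mod_cast hsm.le
      linarith
    have hc2 : 0 ≤ c2 := by positivity
    set M1 := insert (k - u) L with hM1_def
    set M2 := insert (k + v) L with hM2_def
    have hM12 : M1 ≠ M2 := by
      intro h
      have : k - u ∈ M2 := h ▸ Finset.mem_insert_self _ _
      rcases Finset.mem_insert.mp this with h' | h'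
      · omega
      · exact hu_spec h'
    refine ⟨fun L' => (if L' = M1 then c1 else 0) + (if L' = M2 then c2 else 0),
      fun L' => by positivity, ?_⟩
    rw [htp]
    set T := (Finset.Icc 1 (n - 1)).powerset.filter
        (fun L' => insert k L ⊆ L' ∧ L'.card = L.card + 1) with hT_def
    have hsum : ∑ L' ∈ T, ((if L' = M1 then c1 else 0) + (if L' = M2 then c2 else 0))
          • ∏ i ∈ L', ϖ i
        = (if M1 ∈ T then c1 • ∏ i ∈ M1, ϖ i else 0)
          + (if M2 ∈ T then c2 • ∏ i ∈ M2, ϖ i else 0) := by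
      simp only [add_smul, ite_smul, zero_smul]
      rw [Finset.sum_add_distrib, Finset.sum_ite_eq' T M1, Finset.sum_ite_eq' T M2]
    rw [hsum]
    congr 1
    · -- left endpoint
      by_cases h1 : k - u = 0
      · have : M1 ∉ T := by
          intro hmem
          have := (Finset.mem_filter.mp hmem).1
          have := Finset.mem_powerset.mp this
          have : k - u ∈ Finset.Icc 1 (n-1) := this (Finset.mem_insert_self _ _)
          rw [h1] at this
          simpa using this
        rw [if_neg this, h1, h0]
        simp
      · have hmem : M1 ∈ T := by
          rw [hT_def, Finset.mem_filter, Finset.mem_powerset]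
          refine ⟨Finset.insert_subset (Finset.mem_Icc.mpr ⟨by omega, by omega⟩) hL, ?_, ?_⟩
          · exact Finset.insert_subset (Finset.mem_insert_of_mem hkL)
              (Finset.subset_insert _ _)
          · rw [hM1_def, Finset.card_insert_of_notMem hu_spec]
        rw [if_pos hmem, hM1_def, Finset.prod_insert hu_spec]
    · -- right endpoint
      by_cases h2 : k + v = n
      · have : M2 ∉ T := by
          intro hmem
          have := (Finset.mem_filter.mp hmem).1
          have := Finset.mem_powerset.mp this
          have : k + v ∈ Finset.Icc 1 (n-1) := this (Finset.mem_insert_self _ _)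
          rw [h2] at this
          have := Finset.mem_Icc.mp this
          omega
        rw [if_neg this, h2, htop]
        simp
      · have hmem : M2 ∈ T := by
          rw [hT_def, Finset.mem_filter, Finset.mem_powerset]
          refine ⟨Finset.insert_subset (Finset.mem_Icc.mpr ⟨by omega, by omega⟩) hL, ?_, ?_⟩
          · exact Finset.insert_subset (Finset.mem_insert_of_mem hkL)
              (Finset.subset_insert _ _)
          · rw [hM2_def, Finset.card_insert_of_notMem hv_spec]
        rw [if_pos hmem, hM2_def, Finset.prod_insert hv_spec]
  · -- easy case: k ∉ L
    refine ⟨fun L' => if L' = insert k L then 1 else 0,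
      fun L' => by positivity, ?_⟩
    have hmem : insert k L ∈ (Finset.Icc 1 (n - 1)).powerset.filter
        (fun L' => insert k L ⊆ L' ∧ L'.card = L.card + 1) := by
      rw [Finset.mem_filter, Finset.mem_powerset]
      exact ⟨Finset.insert_subset hk hL, le_refl _,
        Finset.card_insert_of_notMem hkL⟩
    simp only [ite_smul, one_smul, zero_smul]
    rw [Finset.sum_ite_eq' _ (insert k L), if_pos hmem, Finset.prod_insert hkL]

end Peterson4

/-- Let `n ≥ 2`, `R` a commutative `ℚ`-algebra, and `ϖ_1, …, ϖ_{n-1} ∈ R`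
satisfying the Peterson relations `ϖ_i (2ϖ_i − ϖ_{i−1} − ϖ_{i+1}) = 0`, with
`ϖ_0 = ϖ_n = 0`.  Then for all `J, K ⊆ {1,…,n-1}` there are nonnegative rationals `c_L`,
indexed by the subsets `L` with `J ∪ K ⊆ L ⊆ {1,…,n-1}` and `|L| = |J| + |K|`, with
`(∏_{j∈J} ϖ_j)(∏_{k∈K} ϖ_k) = Σ_L c_L ∏_{i∈L} ϖ_i`. -/
theorem peterson_product_nonneg_combination (n : ℕ) (hn : 2 ≤ n)
    {R : Type*} [CommRing R] [Algebra ℚ R] (ϖ : ℕ → R)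
    (h0 : ϖ 0 = 0) (htop : ϖ n = 0)
    (hrel : ∀ i : ℕ, 1 ≤ i → i ≤ n - 1 → ϖ i * (2 * ϖ i - ϖ (i - 1) - ϖ (i + 1)) = 0)
    (J K : Finset ℕ) (hJ : J ⊆ Finset.Icc 1 (n - 1)) (hK : K ⊆ Finset.Icc 1 (n - 1)) :
    ∃ c : Finset ℕ → ℚ, (∀ L, 0 ≤ c L) ∧
      (∏ j ∈ J, ϖ j) * (∏ k ∈ K, ϖ k) =
        ∑ L ∈ (Finset.Icc 1 (n - 1)).powerset.filter
            (fun L => J ∪ K ⊆ L ∧ L.card = J.card + K.card),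
          c L • ∏ i ∈ L, ϖ i := by
  classical
  revert hK
  induction K using Finset.induction_on with
  | empty =>
    intro _
    refine ⟨fun L => if L = J then 1 else 0, fun L => by positivity, ?_⟩
    have hmem : J ∈ (Finset.Icc 1 (n - 1)).powerset.filter
        (fun L => J ∪ ∅ ⊆ L ∧ L.card = J.card + (∅ : Finset ℕ).card) := by
      rw [Finset.mem_filter, Finset.mem_powerset]
      refine ⟨hJ, ?_, by simp⟩
      rw [Finset.union_empty]
    simp only [ite_smul, one_smul, zero_smul]
    rw [Finset.sum_ite_eq' _ J, if_pos hmem, Finset.prod_empty, mul_one]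
  | @insert k K hkK ih =>
    intro hK'
    have hK0 : K ⊆ Finset.Icc 1 (n - 1) :=
      (Finset.subset_insert _ _).trans hK'
    have hkIcc : k ∈ Finset.Icc 1 (n - 1) := hK' (Finset.mem_insert_self _ _)
    obtain ⟨c, hc0, hc⟩ := ih hK0
    set T₀ := (Finset.Icc 1 (n - 1)).powerset.filter
        (fun L => J ∪ K ⊆ L ∧ L.card = J.card + K.card) with hT0_def
    set Tn := (Finset.Icc 1 (n - 1)).powerset.filter
        (fun L => J ∪ insert k K ⊆ L ∧ L.card = J.card + (insert k K).card) with hTn_def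
    have key : ∀ L : Finset ℕ, ∃ d : Finset ℕ → ℚ, (∀ L', 0 ≤ d L') ∧
        (L ⊆ Finset.Icc 1 (n - 1) → ϖ k * ∏ i ∈ L, ϖ i =
          ∑ L' ∈ (Finset.Icc 1 (n - 1)).powerset.filter
              (fun L' => insert k L ⊆ L' ∧ L'.card = L.card + 1),
            d L' • ∏ i ∈ L', ϖ i) := by
      intro L
      by_cases hL : L ⊆ Finset.Icc 1 (n - 1)
      · obtain ⟨d, h1, h2⟩ := pet_step n ϖ h0 htop hrel k hkIcc L hL
        exact ⟨d, h1, fun _ => h2⟩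
      · exact ⟨0, fun _ => le_refl 0, fun h => absurd h hL⟩
    choose d hd0 hd using key
    set Tk : Finset ℕ → Finset (Finset ℕ) := fun L =>
      (Finset.Icc 1 (n - 1)).powerset.filter
        (fun L' => insert k L ⊆ L' ∧ L'.card = L.card + 1) with hTk_def
    have hTsub : ∀ L ∈ T₀, Tk L ⊆ Tn := by
      intro L hL L' hL'
      rw [hT0_def, Finset.mem_filter, Finset.mem_powerset] at hL
      obtain ⟨hLsub, hJK, hcard⟩ := hL
      rw [hTk_def, Finset.mem_filter, Finset.mem_powerset] at hL'
      obtain ⟨hL'sub, hins, hcard'⟩ := hL'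
      rw [hTn_def, Finset.mem_filter, Finset.mem_powerset]
      refine ⟨hL'sub, ?_, ?_⟩
      · apply Finset.union_subset
        · exact (Finset.union_subset_iff.mp hJK).1.trans
            ((Finset.subset_insert _ _).trans hins)
        · apply Finset.insert_subset (hins (Finset.mem_insert_self _ _))
          exact (Finset.union_subset_iff.mp hJK).2.trans
            ((Finset.subset_insert _ _).trans hins)
      · rw [hcard', hcard, Finset.card_insert_of_notMem hkK]; ring
    refine ⟨fun L' => ∑ L ∈ T₀, c L * (if L' ∈ Tk L then d L L' else 0),
      fun L' => Finset.sum_nonneg fun L _ => mul_nonneg (hc0 L)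
        (by split <;> [exact hd0 L L'; exact le_refl 0]), ?_⟩
    calc (∏ j ∈ J, ϖ j) * ∏ kk ∈ insert k K, ϖ kk
        = ϖ k * ((∏ j ∈ J, ϖ j) * ∏ kk ∈ K, ϖ kk) := by
          rw [Finset.prod_insert hkK]; ring
      _ = ∑ L ∈ T₀, c L • (ϖ k * ∏ i ∈ L, ϖ i) := by
          rw [hc, Finset.mul_sum]
          exact Finset.sum_congr rfl fun L _ => (mul_smul_comm _ _ _)
      _ = ∑ L ∈ T₀, c L • (∑ L' ∈ Tn, (if L' ∈ Tk L then d L L' else 0)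
            • ∏ i ∈ L', ϖ i) := by
          refine Finset.sum_congr rfl fun L hL => ?_
          congr 1
          have hLsub : L ⊆ Finset.Icc 1 (n - 1) := by
            rw [hT0_def, Finset.mem_filter, Finset.mem_powerset] at hL
            exact hL.1
          rw [hd L hLsub]
          have hext := Finset.sum_subset (hTsub L hL)
            (f := fun L' => (if L' ∈ Tk L then d L L' else 0) • ∏ i ∈ L', ϖ i)
            (fun L' _ hL' => by simp only [if_neg hL', zero_smul])
          rw [← hext]
          exact Finset.sum_congr rfl fun L' hL' => by simp only [if_pos hL']
      _ = ∑ L' ∈ Tn, (∑ L ∈ T₀, c L * (if L' ∈ Tk L then d L L' else 0))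
            • ∏ i ∈ L', ϖ i := by
          simp only [Finset.smul_sum, smul_smul]
          rw [Finset.sum_comm]
          exact Finset.sum_congr rfl fun L' _ => (Finset.sum_smul).symm
end

section
/- Let n ≥ 2 and let R_n denote the quotient of the polynomial ring ℚ[x_1,…,x_{n−1}] by the ideal generated by the n−1 elements x_i·(2x_i − x_{i−1} − x_{i+1}) for 1 ≤ i ≤ n−1, with the convention x_0 = x_n = 0. Then the images in R_n of the 2^{n−1} square-free monomials ∏_{i∈L} x_i, for L ranging over all subsets of {1,…,n−1}, span R_n as a ℚ-vector space. -/
set_option maxHeartbeats 1000000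
set_option synthInstance.maxHeartbeats 1000000

noncomputable section

def petersonX (n : ℕ) (i : ℕ) : MvPolynomial (Fin (n - 1)) ℚ :=
  if h : 1 ≤ i ∧ i ≤ n - 1 then MvPolynomial.X ⟨i - 1, by omega⟩ else 0

def petersonIdeal (n : ℕ) : Ideal (MvPolynomial (Fin (n - 1)) ℚ) :=
  Ideal.span
    ((fun i => petersonX n i * (2 * petersonX n i - petersonX n (i - 1) - petersonX n (i + 1))) ''
      ↑(Finset.Icc 1 (n - 1)))

namespace PetAux

abbrev Q (n : ℕ) := MvPolynomial (Fin (n - 1)) ℚ ⧸ petersonIdeal n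

def S (n : ℕ) : Submodule ℚ (Q n) :=
  Submodule.span ℚ
    ((fun L : Finset ℕ => Ideal.Quotient.mk (petersonIdeal n) (∏ i ∈ L, petersonX n i)) ''
      ↑(Finset.Icc 1 (n - 1)).powerset)

def q (n : ℕ) (i : ℕ) (L : Finset ℕ) : Q n :=
  Ideal.Quotient.mk (petersonIdeal n) (petersonX n i * ∏ j ∈ L, petersonX n j)

variable (n : ℕ)

lemma rel {L : Finset ℕ} (hL : L ⊆ Finset.Icc 1 (n-1)) {i : ℕ} (hi : i ∈ L) :
    q n (i-1) L + q n (i+1) L = q n i L + q n i L := by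
  have hmem : petersonX n i * (2 * petersonX n i - petersonX n (i - 1) - petersonX n (i + 1))
      ∈ petersonIdeal n :=
    Ideal.subset_span (Set.mem_image_of_mem _ (by exact_mod_cast hL hi))
  have hmem2 : petersonX n i * (2 * petersonX n i - petersonX n (i - 1) - petersonX n (i + 1))
      * (∏ j ∈ L.erase i, petersonX n j) ∈ petersonIdeal n := Ideal.mul_mem_right _ _ hmem
  have hmem3 : -(petersonX n i * (2 * petersonX n i - petersonX n (i - 1) - petersonX n (i + 1))
      * (∏ j ∈ L.erase i, petersonX n j)) ∈ petersonIdeal n := neg_mem hmem2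
  have hprod : (∏ j ∈ L, petersonX n j) = petersonX n i * ∏ j ∈ L.erase i, petersonX n j :=
    (Finset.mul_prod_erase L _ hi).symm
  unfold q
  rw [← map_add, ← map_add, Ideal.Quotient.eq, hprod]
  convert hmem3 using 1
  ring

lemma run : ∀ (m : ℕ) (L : Finset ℕ), L ⊆ Finset.Icc 1 (n-1) → ∀ i : ℕ,
    (∀ k < m, i + k ∈ L) → i + m ∉ L →
    ((m : Q n) + 1) * q n i L = (m : Q n) * q n (i-1) L + q n (i+m) L := by
  intro m
  induction m with
  | zero => intro L hL i _ h0; simp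
  | succ m ih =>
    intro L hL i hin hout
    have h1 : i ∈ L := by simpa using hin 0 (Nat.succ_pos m)
    have hrel := rel n hL h1
    have ihs := ih L hL (i+1)
      (fun k hk => by
        have h := hin (k+1) (by omega)
        rwa [show i + 1 + k = i + (k+1) from by omega])
      (by rwa [show i + 1 + m = i + (m+1) from by omega])
    rw [Nat.add_sub_cancel] at ihs
    rw [show i + 1 + m = i + (m+1) from by omega] at ihs
    push_cast
    linear_combination (-(m : Q n) - 1) * hrel + ihs

lemma notin_mem {L : Finset ℕ} (hL : L ⊆ Finset.Icc 1 (n-1)) {j : ℕ} (hj : j ∉ L) :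
    q n j L ∈ S n := by
  by_cases h : 1 ≤ j ∧ j ≤ n - 1
  · apply Submodule.subset_span
    refine ⟨insert j L, ?_, ?_⟩
    · simp only [Finset.coe_powerset, Set.mem_setOf_eq, Finset.mem_coe, Finset.mem_powerset]
      exact Finset.insert_subset (Finset.mem_Icc.mpr h) hL
    · simp only []
      rw [Finset.prod_insert hj]
      rfl
  · have h0 : petersonX n j = 0 := dif_neg h
    simp [q, h0]

lemma keyA {L : Finset ℕ} (hL : L ⊆ Finset.Icc 1 (n-1)) (i : ℕ) : q n i L ∈ S n := by
  induction i using Nat.strong_induction_on with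
  | _ i ih =>
    by_cases hi : i ∈ L
    · have hi1 : 1 ≤ i := (Finset.mem_Icc.mp (hL hi)).1
      have hex : ∃ m, i + m ∉ L := ⟨n, fun hc => by
        have := Finset.mem_Icc.mp (hL hc); omega⟩
      have hout : i + Nat.find hex ∉ L := Nat.find_spec hex
      have hin : ∀ k < Nat.find hex, i + k ∈ L := fun k hk => not_not.mp (Nat.find_min hex hk)
      have hrun := run n (Nat.find hex) L hL i hin hout
      have hs : ((Nat.find hex : Q n) + 1) * q n i L ∈ S n := by
        rw [hrun]
        refine Submodule.add_mem _ ?_ (notin_mem n hL hout)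
        have h' : q n (i-1) L ∈ S n := ih (i-1) (by omega)
        have e : ((Nat.find hex : Q n)) * q n (i-1) L
            = ((Nat.find hex : ℚ)) • q n (i-1) L := by
          rw [Algebra.smul_def ((Nat.find hex : ℚ)) (q n (i-1) L)]; simp
        rw [e]; exact Submodule.smul_mem _ _ h'
      have e : ((Nat.find hex : Q n) + 1) * q n i L
          = ((Nat.find hex : ℚ) + 1) • q n i L := by
        rw [Algebra.smul_def ((Nat.find hex : ℚ) + 1) (q n i L)]; simp
      rw [e] at hs
      have h2 := Submodule.smul_mem (S n) ((Nat.find hex : ℚ)+1)⁻¹ hs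
      rwa [smul_smul, inv_mul_cancel₀ (by positivity), one_smul] at h2
    · exact notin_mem n hL hi

lemma mul_px_mem (i : ℕ) {x : Q n} (hx : x ∈ S n) :
    x * Ideal.Quotient.mk (petersonIdeal n) (petersonX n i) ∈ S n := by
  induction hx using Submodule.span_induction with
  | mem a ha =>
    obtain ⟨L, hL, rfl⟩ := ha
    have hL' : L ⊆ Finset.Icc 1 (n-1) := Finset.mem_powerset.mp (by exact_mod_cast hL)
    have e : (Ideal.Quotient.mk (petersonIdeal n) (∏ j ∈ L, petersonX n j)) *
        Ideal.Quotient.mk (petersonIdeal n) (petersonX n i) = q n i L := by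
      rw [q, ← map_mul, mul_comm]
    rw [e]
    exact keyA n hL' i
  | zero => simp
  | add a b _ _ ha hb => rw [add_mul]; exact Submodule.add_mem _ ha hb
  | smul c a _ ha => rw [smul_mul_assoc]; exact Submodule.smul_mem _ _ ha

lemma one_mem : (1 : Q n) ∈ S n := by
  apply Submodule.subset_span
  exact ⟨∅, by simp, by simp⟩

lemma px_fin (j : Fin (n-1)) : petersonX n (j.1+1) = MvPolynomial.X j := by
  have h : 1 ≤ j.1+1 ∧ j.1+1 ≤ n-1 := ⟨by omega, by have := j.isLt; omega⟩
  rw [petersonX, dif_pos h]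
  congr 1

end PetAux

/-- For `n ≥ 2`, the images in `R_n = ℚ[x_1,…,x_{n-1}]/I_n` of the
`2^{n-1}` square-free monomials `∏_{i∈L} x_i`, for `L ⊆ {1,…,n-1}`, span `R_n` as a
`ℚ`-vector space. -/
theorem squarefree_monomials_span (n : ℕ) (hn : 2 ≤ n) :
    Submodule.span ℚ
      ((fun L : Finset ℕ => Ideal.Quotient.mk (petersonIdeal n) (∏ i ∈ L, petersonX n i)) ''
        ↑(Finset.Icc 1 (n - 1)).powerset) = ⊤ := by
  show PetAux.S n = ⊤
  rw [eq_top_iff]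
  rintro x -
  obtain ⟨p, rfl⟩ := Ideal.Quotient.mk_surjective x
  induction p using MvPolynomial.induction_on with
  | C a =>
    have e : Ideal.Quotient.mk (petersonIdeal n) (MvPolynomial.C a)
        = a • (1 : PetAux.Q n) := by
      rw [Algebra.smul_def a (1 : PetAux.Q n), mul_one]
      rfl
    rw [e]
    exact Submodule.smul_mem _ _ (PetAux.one_mem n)
  | add p r hp hr => rw [map_add]; exact Submodule.add_mem _ hp hr
  | mul_X p j hp =>
    rw [map_mul, ← PetAux.px_fin n j]
    exact PetAux.mul_px_mem n (j.1+1) hp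
end
end

section
/- Let n ≥ 2 and let R_n denote the quotient of the polynomial ring ℚ[x_1,…,x_{n−1}] by the ideal generated by the n−1 elements x_i·(2x_i − x_{i−1} − x_{i+1}) for 1 ≤ i ≤ n−1, with the convention x_0 = x_n = 0. Then the images in R_n of the 2^{n−1} square-free monomials ∏_{i∈L} x_i, for L ranging over all subsets of {1,…,n−1}, form a basis of R_n as a ℚ-vector space; in particular dim_ℚ R_n = 2^{n−1}. -/
set_option synthInstance.maxHeartbeats 1000000
set_option maxHeartbeats 1000000

noncomputable section

namespace PetPf

open Finset

abbrev pV : Type := Finset ℕ →₀ ℚ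

/-- start of the maximal run of `i` in `S`. -/
def runS (S : Finset ℕ) (i : ℕ) : ℕ :=
  i - Nat.findGreatest (fun k => Finset.Icc (i - k) i ⊆ S) i

/-- end of the maximal run of `i` in `S` (within `[1, n-1]`). -/
def runE (n : ℕ) (S : Finset ℕ) (i : ℕ) : ℕ :=
  i + Nat.findGreatest (fun k => Finset.Icc i (i + k) ⊆ S) (n - 1)

variable {n : ℕ} {S : Finset ℕ} {i : ℕ}

lemma runS_le (S : Finset ℕ) (i : ℕ) : runS S i ≤ i := Nat.sub_le _ _

lemma runE_ge (n : ℕ) (S : Finset ℕ) (i : ℕ) : i ≤ runE n S i := Nat.le_add_right _ _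

lemma runS_subset (hi : i ∈ S) : Finset.Icc (runS S i) i ⊆ S := by
  have h0 : Finset.Icc (i - 0) i ⊆ S := by
    intro x hx
    rw [Finset.mem_Icc] at hx
    have : x = i := by omega
    rwa [this]
  show Finset.Icc (i - Nat.findGreatest (fun k => Finset.Icc (i - k) i ⊆ S) i) i ⊆ S
  exact Nat.findGreatest_spec (P := fun k => Finset.Icc (i - k) i ⊆ S) (Nat.zero_le i) h0

lemma runS_mem (hi : i ∈ S) : runS S i ∈ S :=
  runS_subset hi (Finset.mem_Icc.mpr ⟨le_rfl, runS_le S i⟩)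

lemma runS_pred_not_mem (hi : i ∈ S) (h0 : 0 ∉ S) : runS S i - 1 ∉ S := by
  intro hmem
  have hapos : 1 ≤ runS S i := by
    rcases Nat.eq_zero_or_pos (runS S i) with h | h
    · rw [h] at hmem; exact absurd hmem h0
    · exact h
  have hsub : Finset.Icc (runS S i - 1) i ⊆ S := by
    intro x hx
    rw [Finset.mem_Icc] at hx
    rcases Nat.eq_or_lt_of_le hx.1 with h | h
    · rwa [← h]
    · exact runS_subset hi (Finset.mem_Icc.mpr ⟨by omega, hx.2⟩)
  have hKle : Nat.findGreatest (fun k => Finset.Icc (i - k) i ⊆ S) i ≤ i := Nat.findGreatest_le i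
  have hrun : runS S i = i - Nat.findGreatest (fun k => Finset.Icc (i - k) i ⊆ S) i := rfl
  have harg : i - (Nat.findGreatest (fun k => Finset.Icc (i - k) i ⊆ S) i + 1) = runS S i - 1 := by
    omega
  refine Nat.findGreatest_is_greatest
      (k := Nat.findGreatest (fun k => Finset.Icc (i - k) i ⊆ S) i + 1)
      (Nat.lt_succ_self _) (by omega) ?_
  show Finset.Icc (i - (Nat.findGreatest (fun k => Finset.Icc (i - k) i ⊆ S) i + 1)) i ⊆ S
  rw [harg]
  exact hsub

lemma runE_subset (hn2 : 1 ≤ n - 1) (hle : i ≤ n - 1) (hi : i ∈ S) :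
    Finset.Icc i (runE n S i) ⊆ S := by
  have h0 : Finset.Icc i (i + 0) ⊆ S := by
    intro x hx
    rw [Finset.mem_Icc] at hx
    have : x = i := by omega
    rwa [this]
  show Finset.Icc i (i + Nat.findGreatest (fun k => Finset.Icc i (i + k) ⊆ S) (n - 1)) ⊆ S
  exact Nat.findGreatest_spec (P := fun k => Finset.Icc i (i + k) ⊆ S) (Nat.zero_le _) h0

lemma runE_mem (hn2 : 1 ≤ n - 1) (hle : i ≤ n - 1) (hi : i ∈ S) : runE n S i ∈ S :=
  runE_subset hn2 hle hi (Finset.mem_Icc.mpr ⟨runE_ge n S i, le_rfl⟩)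

lemma runE_succ_not_mem (hS : S ⊆ Finset.Icc 1 (n - 1)) (hi : i ∈ S) :
    runE n S i + 1 ∉ S := by
  intro hmem
  have hbd : runE n S i + 1 ≤ n - 1 := by
    have := hS hmem
    rw [Finset.mem_Icc] at this
    omega
  have hi2 : i ≤ n - 1 := by
    have := hS hi; rw [Finset.mem_Icc] at this; omega
  have hsub : Finset.Icc i (runE n S i + 1) ⊆ S := by
    intro x hx
    rw [Finset.mem_Icc] at hx
    rcases Nat.eq_or_lt_of_le hx.2 with h | h
    · rwa [h]
    · exact runE_subset (by omega) hi2 hi (Finset.mem_Icc.mpr ⟨hx.1, by omega⟩)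
  have hrun : runE n S i = i + Nat.findGreatest (fun k => Finset.Icc i (i + k) ⊆ S) (n - 1) := rfl
  have harg : i + (Nat.findGreatest (fun k => Finset.Icc i (i + k) ⊆ S) (n - 1) + 1)
      = runE n S i + 1 := by omega
  refine Nat.findGreatest_is_greatest
      (k := Nat.findGreatest (fun k => Finset.Icc i (i + k) ⊆ S) (n - 1) + 1)
      (Nat.lt_succ_self _) (by omega) ?_
  show Finset.Icc i (i + (Nat.findGreatest (fun k => Finset.Icc i (i + k) ⊆ S) (n - 1) + 1)) ⊆ S
  rw [harg]
  exact hsub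

/-- characterisation of `runS`. -/
lemma runS_eq_of (hi : i ∈ S) (h0 : 0 ∉ S) {a : ℕ} (ha : a ≤ i) (h1 : Finset.Icc a i ⊆ S)
    (h2 : a - 1 ∉ S) (h3 : 1 ≤ a) : runS S i = a := by
  have hle' : runS S i ≤ i := runS_le S i
  have hsub' : Finset.Icc (runS S i) i ⊆ S := runS_subset hi
  have hnot' : runS S i - 1 ∉ S := runS_pred_not_mem hi h0
  have hpos' : 1 ≤ runS S i := by
    rcases Nat.eq_zero_or_pos (runS S i) with h | h
    · exfalso; apply h0; have := runS_mem hi; rwa [h] at this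
    · exact h
  rcases lt_trichotomy (runS S i) a with h | h | h
  · exfalso
    exact h2 (hsub' (show a - 1 ∈ Finset.Icc (runS S i) i by rw [Finset.mem_Icc]; omega))
  · exact h
  · exfalso
    exact hnot' (h1 (show runS S i - 1 ∈ Finset.Icc a i by rw [Finset.mem_Icc]; omega))

/-- characterisation of `runE`. -/
lemma runE_eq_of (hS : S ⊆ Finset.Icc 1 (n - 1)) (hi : i ∈ S) {b : ℕ} (hb : i ≤ b)
    (h1 : Finset.Icc i b ⊆ S) (h2 : b + 1 ∉ S) : runE n S i = b := by
  have h0 : 0 ∉ S := fun h => by have := hS h; rw [Finset.mem_Icc] at this; omega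
  have hi2 : i ≤ n - 1 := by have := hS hi; rw [Finset.mem_Icc] at this; omega
  have hi1 : 1 ≤ i := by have := hS hi; rw [Finset.mem_Icc] at this; omega
  have hn2 : 1 ≤ n - 1 := by omega
  have hge' : i ≤ runE n S i := runE_ge n S i
  have hsub' : Finset.Icc i (runE n S i) ⊆ S := runE_subset hn2 hi2 hi
  have hnot' : runE n S i + 1 ∉ S := runE_succ_not_mem hS hi
  rcases lt_trichotomy (runE n S i) b with h | h | h
  · exfalso
    exact hnot' (h1 (show runE n S i + 1 ∈ Finset.Icc i b by rw [Finset.mem_Icc]; omega))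
  · exact h
  · exfalso
    exact h2 (hsub' (show b + 1 ∈ Finset.Icc i (runE n S i) by rw [Finset.mem_Icc]; omega))

lemma zero_not_mem (hS : S ⊆ Finset.Icc 1 (n - 1)) : 0 ∉ S :=
  fun h => by have := hS h; rw [Finset.mem_Icc] at this; omega

lemma mem_bd (hS : S ⊆ Finset.Icc 1 (n - 1)) (h : i ∈ S) : 1 ≤ i ∧ i ≤ n - 1 := by
  have := hS h; rwa [Finset.mem_Icc] at this

lemma runS_succ (hS : S ⊆ Finset.Icc 1 (n - 1)) (hi : i ∈ S) (hi2 : i + 1 ∈ S) :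
    runS S (i + 1) = runS S i := by
  apply runS_eq_of hi2 (zero_not_mem hS)
  · have := runS_le S i; omega
  · intro x hx
    rw [Finset.mem_Icc] at hx
    rcases Nat.eq_or_lt_of_le hx.2 with h | h
    · rwa [h]
    · exact runS_subset hi (Finset.mem_Icc.mpr ⟨hx.1, by omega⟩)
  · exact runS_pred_not_mem hi (zero_not_mem hS)
  · have := mem_bd hS (runS_mem hi); exact this.1

lemma runE_pred (hS : S ⊆ Finset.Icc 1 (n - 1)) (hi : i ∈ S) (hi2 : i + 1 ∈ S) :
    runE n S i = runE n S (i + 1) := by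
  apply runE_eq_of hS hi
  · have h := runE_ge n S (i + 1); omega
  · intro x hx
    rw [Finset.mem_Icc] at hx
    rcases Nat.eq_or_lt_of_le hx.1 with h | h
    · rw [← h]; exact hi
    · have hb := mem_bd hS hi2
      have hn2 : 1 ≤ n - 1 := by omega
      exact runE_subset hn2 hb.2 hi2 (Finset.mem_Icc.mpr ⟨by omega, hx.2⟩)
  · exact runE_succ_not_mem hS hi2

lemma runS_eq_self (hS : S ⊆ Finset.Icc 1 (n - 1)) (hi : i ∈ S) (h : i - 1 ∉ S) :
    runS S i = i := by
  apply runS_eq_of hi (zero_not_mem hS) le_rfl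
  · intro x hx
    rw [Finset.mem_Icc] at hx
    have hxi : x = i := le_antisymm hx.2 hx.1
    rw [hxi]; exact hi
  · exact h
  · exact (mem_bd hS hi).1

lemma runE_eq_self (hS : S ⊆ Finset.Icc 1 (n - 1)) (hi : i ∈ S) (h : i + 1 ∉ S) :
    runE n S i = i := by
  apply runE_eq_of hS hi le_rfl
  · intro x hx
    rw [Finset.mem_Icc] at hx
    have hxi : x = i := le_antisymm hx.2 hx.1
    rw [hxi]; exact hi
  · exact h

lemma runE_succ_mem_le (hS : S ⊆ Finset.Icc 1 (n - 1)) (hi : i ∈ S) (hi2 : i + 1 ∈ S) :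
    i + 1 ≤ runE n S i := by
  rw [runE_pred hS hi hi2]
  exact runE_ge n S (i + 1)

lemma runS_pred_mem_ge (hS : S ⊆ Finset.Icc 1 (n - 1)) (hi : i ∈ S) (hi2 : i - 1 ∈ S) :
    runS S i ≤ i - 1 := by
  have h1 : 1 ≤ i := (mem_bd hS hi).1
  have hii : i - 1 + 1 = i := by omega
  have h := runS_succ hS hi2 (by rwa [hii])
  rw [hii] at h
  have h2 := runS_le S (i - 1)
  omega

/-- the "boundary vector" `e_{S ∪ {j}}` (or `0` off the board). -/
def uvec (n : ℕ) (S : Finset ℕ) (j : ℕ) : pV :=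
  if 1 ≤ j ∧ j ≤ n - 1 then Finsupp.single (insert j S) 1 else 0

/-- the value of the operator `X_i` on the basis vector `e_S`. -/
def xact (n : ℕ) (i : ℕ) (S : Finset ℕ) : pV :=
  if S ⊆ Finset.Icc 1 (n - 1) ∧ 1 ≤ i ∧ i ≤ n - 1 then
    if i ∈ S then
      (((runE n S i : ℚ) - (runS S i : ℚ) + 2)⁻¹) •
        ((((runE n S i : ℚ) + 1 - (i : ℚ)) • uvec n S (runS S i - 1)
          + ((i : ℚ) - (runS S i : ℚ) + 1) • uvec n S (runE n S i + 1)))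
    else Finsupp.single (insert i S) 1
  else 0

lemma xact_junk (h : ¬ S ⊆ Finset.Icc 1 (n - 1)) : xact n i S = 0 := by
  rw [xact, if_neg]; tauto

lemma xact_off (h : ¬ (1 ≤ i ∧ i ≤ n - 1)) : xact n i S = 0 := by
  rw [xact, if_neg]; tauto

lemma xact_not_mem (hS : S ⊆ Finset.Icc 1 (n - 1)) (hb : 1 ≤ i ∧ i ≤ n - 1) (h : i ∉ S) :
    xact n i S = Finsupp.single (insert i S) 1 := by
  rw [xact, if_pos ⟨hS, hb⟩, if_neg h]

lemma xact_mem (hS : S ⊆ Finset.Icc 1 (n - 1)) (h : i ∈ S) :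
    xact n i S =
      (((runE n S i : ℚ) - (runS S i : ℚ) + 2)⁻¹) •
        ((((runE n S i : ℚ) + 1 - (i : ℚ)) • uvec n S (runS S i - 1)
          + ((i : ℚ) - (runS S i : ℚ) + 1) • uvec n S (runE n S i + 1)) ) := by
  rw [xact, if_pos ⟨hS, mem_bd hS h⟩, if_pos h]

lemma xact_not_mem_uvec (hS : S ⊆ Finset.Icc 1 (n - 1)) (h : i ∉ S) :
    xact n i S = uvec n S i := by
  by_cases hb : 1 ≤ i ∧ i ≤ n - 1
  · rw [xact_not_mem hS hb h, uvec, if_pos hb]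
  · rw [xact_off hb, uvec, if_neg hb]

/-- Key harmonicity: for `i ∈ S`, `X_{i-1} e_S + X_{i+1} e_S = 2 X_i e_S`. -/
lemma xact_harm (hS : S ⊆ Finset.Icc 1 (n - 1)) (hi : i ∈ S) :
    xact n (i - 1) S + xact n (i + 1) S = (2 : ℚ) • xact n i S := by
  have hb := mem_bd hS hi
  set a := runS S i with ha
  set b := runE n S i with hb'
  have hale : a ≤ i := runS_le S i
  have hble : i ≤ b := runE_ge n S i
  have hapos : 1 ≤ a := (mem_bd hS (runS_mem hi)).1
  have hbbd : b ≤ n - 1 := (mem_bd hS (runE_mem (by omega) hb.2 hi)).2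
  have hden : ((b : ℚ) - (a : ℚ) + 2) ≠ 0 := by
    have : (0:ℚ) < (b : ℚ) - (a : ℚ) + 2 := by
      have : (a : ℚ) ≤ (b : ℚ) := by exact_mod_cast le_trans hale hble
      linarith
    linarith
  by_cases h1 : i - 1 ∈ S <;> by_cases h2 : i + 1 ∈ S
  · -- interior: all three in the same run
    have hi1 : 1 ≤ i - 1 := (mem_bd hS h1).1
    have hii : i - 1 + 1 = i := by omega
    have e1 : runS S (i - 1) = a := by
      have := runS_succ hS h1 (by rwa [hii]); rw [hii] at this; omega
    have e2 : runE n S (i - 1) = b := by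
      have := runE_pred hS h1 (by rwa [hii]); rw [hii] at this; omega
    have e3 : runS S (i + 1) = a := runS_succ hS hi h2
    have e4 : runE n S (i + 1) = b := (runE_pred hS hi h2).symm
    rw [xact_mem hS h1, xact_mem hS h2, xact_mem hS hi, e1, e2, e3, e4, ← ha, ← hb']
    have hc1 : ((i - 1 : ℕ) : ℚ) = (i : ℚ) - 1 := by
      have : (1:ℕ) ≤ i := hb.1; push_cast [this]; ring
    rw [hc1]
    push_cast
    match_scalars <;> field_simp <;> ring
  · -- i - 1 ∈ S, i + 1 ∉ S : b = i
    have hbi : b = i := runE_eq_self hS hi h2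
    have hi1 : 1 ≤ i - 1 := (mem_bd hS h1).1
    have hii : i - 1 + 1 = i := by omega
    have e1 : runS S (i - 1) = a := by
      have := runS_succ hS h1 (by rwa [hii]); rw [hii] at this; omega
    have e2 : runE n S (i - 1) = b := by
      have := runE_pred hS h1 (by rwa [hii]); rw [hii] at this; omega
    have e5 : xact n (i + 1) S = uvec n S (i + 1) := xact_not_mem_uvec hS h2
    rw [xact_mem hS h1, xact_mem hS hi, e1, e2, e5, ← ha, ← hb', hbi]
    have hc1 : ((i - 1 : ℕ) : ℚ) = (i : ℚ) - 1 := by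
      have : (1:ℕ) ≤ i := hb.1; push_cast [this]; ring
    have harg : i - 1 + 1 = i := hii
    rw [hc1]
    have hargu : uvec n S (i + 1) = uvec n S (i + 1) := rfl
    -- coefficient identity
    have hden2 : ((i : ℚ) - (a : ℚ) + 2) ≠ 0 := by
      have : (a : ℚ) ≤ (i : ℚ) := by exact_mod_cast hale
      intro h; linarith
    push_cast
    match_scalars <;> field_simp <;> ring
  · -- i - 1 ∉ S, i + 1 ∈ S : a = i
    have hai : a = i := runS_eq_self hS hi h1
    have e3 : runS S (i + 1) = a := runS_succ hS hi h2
    have e4 : runE n S (i + 1) = b := (runE_pred hS hi h2).symm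
    have e5 : xact n (i - 1) S = uvec n S (i - 1) := xact_not_mem_uvec hS h1
    rw [xact_mem hS h2, xact_mem hS hi, e3, e4, e5, ← ha, ← hb', hai]
    have hargu : runS S i - 1 = i - 1 := by rw [← ha, hai]
    rw [hargu] at *
    have hden2 : ((b : ℚ) - (i : ℚ) + 2) ≠ 0 := by
      have : (i : ℚ) ≤ (b : ℚ) := by exact_mod_cast hble
      intro h; linarith
    push_cast
    match_scalars <;> field_simp <;> ring
  · -- isolated point : a = b = i
    have hai : a = i := runS_eq_self hS hi h1
    have hbi : b = i := runE_eq_self hS hi h2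
    have e5 : xact n (i - 1) S = uvec n S (i - 1) := xact_not_mem_uvec hS h1
    have e6 : xact n (i + 1) S = uvec n S (i + 1) := xact_not_mem_uvec hS h2
    rw [e5, e6, xact_mem hS hi, ← ha, ← hb', hai, hbi]
    push_cast
    match_scalars <;> field_simp <;> ring

/-- The operator `X_i` on `pV`. -/
def Xop (n i : ℕ) : pV →ₗ[ℚ] pV := Finsupp.lift pV ℚ (Finset ℕ) (xact n i)

lemma Xop_single (n i : ℕ) (S : Finset ℕ) (c : ℚ) :
    Xop n i (Finsupp.single S c) = c • xact n i S := by
  rw [Xop]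
  simp [Finsupp.lift_apply, Finsupp.sum_single_index]

lemma Xop_off (h : ¬ (1 ≤ i ∧ i ≤ n - 1)) : Xop n i = 0 := by
  apply Finsupp.lhom_ext
  intro S c
  rw [Xop_single, xact_off h, smul_zero]
  rfl

/-- Discrete maximum principle : a function harmonic on `S` and vanishing outside `S`
vanishes. -/
lemma harm_zero {S : Finset ℕ} (hS : S ⊆ Finset.Icc 1 (n - 1)) (h : ℕ → pV)
    (h0 : ∀ i, i ∉ S → h i = 0)
    (hh : ∀ i ∈ S, h (i - 1) + h (i + 1) = (2 : ℚ) • h i) : ∀ i, h i = 0 := by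
  -- linear growth along runs
  have claim : ∀ k a, a ∈ S → a - 1 ∉ S → Finset.Icc a (a + k) ⊆ S →
      h (a + k) = ((k : ℚ) + 1) • h a := by
    intro k
    induction k using Nat.strong_induction_on with
    | _ k ih =>
      intro a ha ha' hsub
      match k, ih with
      | 0, _ => simp
      | 1, _ =>
          have h1 := hh a ha
          rw [h0 (a - 1) ha'] at h1
          rw [zero_add] at h1
          rw [h1]
          norm_num
      | (k + 2), ih =>
          have hmem1 : a + k + 1 ∈ S := hsub (by rw [Finset.mem_Icc]; omega)
          have h1 := hh (a + k + 1) hmem1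
          have e1 : a + k + 1 - 1 = a + k := by omega
          have e2 : a + k + 1 + 1 = a + (k + 2) := by omega
          rw [e1, e2] at h1
          have ih1 : h (a + k) = ((k : ℚ) + 1) • h a := by
            apply ih k (by omega) a ha ha'
            intro x hx
            apply hsub
            rw [Finset.mem_Icc] at hx ⊢
            omega
          have ih2 : h (a + (k + 1)) = (((k : ℚ) + 1) + 1) • h a := by
            have := ih (k + 1) (by omega) a ha ha' (by
              intro x hx
              apply hsub
              rw [Finset.mem_Icc] at hx ⊢
              omega)
            push_cast at this
            exact this
          have e3 : a + k + 1 = a + (k + 1) := by omega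
          rw [e3, ih1, ih2] at h1
          have : h (a + (k + 2)) = (2 : ℚ) • ((((k : ℚ) + 1) + 1) • h a) - ((k : ℚ) + 1) • h a := by
            rw [← h1]; abel
          rw [this]
          push_cast
          match_scalars
          ring
  intro i
  by_cases hi : i ∈ S
  · -- kill the run start
    have h0' : 0 ∉ S := zero_not_mem hS
    set a := runS S i with ha
    have haS : a ∈ S := runS_mem hi
    have ha' : a - 1 ∉ S := runS_pred_not_mem hi h0'
    have hb := mem_bd hS hi
    set b := runE n S i with hbdef
    have hbS : b ∈ S := runE_mem (by omega) hb.2 hi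
    have hab : a ≤ i := runS_le S i
    have hib : i ≤ b := runE_ge n S i
    have hsubab : Finset.Icc a b ⊆ S := by
      intro x hx
      rw [Finset.mem_Icc] at hx
      by_cases hxi : x ≤ i
      · exact runS_subset hi (by rw [Finset.mem_Icc]; omega)
      · exact runE_subset (by omega) hb.2 hi (by rw [Finset.mem_Icc]; omega)
    have hb1 : b + 1 ∉ S := runE_succ_not_mem hS hi
    -- h b and h (b-1)
    have hbeq : h b = ((b : ℚ) - a + 1) • h a := by
      have := claim (b - a) a haS ha' (by
        intro x hx
        apply hsubab
        rw [Finset.mem_Icc] at hx ⊢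
        omega)
      have e : a + (b - a) = b := by omega
      rw [e] at this
      rw [this]
      have : ((b - a : ℕ) : ℚ) = (b : ℚ) - a := by
        have : a ≤ b := le_trans hab hib
        push_cast [this]
        ring
      rw [this]
    have hbm1 : h (b - 1) = ((b : ℚ) - a) • h a := by
      by_cases hba : b = a
      · have : b - 1 ∉ S := by rw [hba]; exact ha'
        rw [h0 _ this, hba]
        simp
      · have hlt : a < b := lt_of_le_of_ne (le_trans hab hib) (Ne.symm hba)
        have := claim (b - 1 - a) a haS ha' (by
          intro x hx
          apply hsubab
          rw [Finset.mem_Icc] at hx ⊢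
          omega)
        have e : a + (b - 1 - a) = b - 1 := by omega
        rw [e] at this
        rw [this]
        have : ((b - 1 - a : ℕ) : ℚ) + 1 = (b : ℚ) - a := by
          have h1' : 1 ≤ b := by omega
          have h2' : a ≤ b - 1 := by omega
          push_cast [h2', h1']
          ring
        rw [this]
    -- harmonic relation at b
    have hrel := hh b hbS
    rw [h0 (b + 1) hb1, add_zero, hbeq, hbm1] at hrel
    -- ((b-a) - 2(b-a+1)) • h a = 0
    have hzero : ((b : ℚ) - a + 2) • h a = 0 := by
      have : (2 : ℚ) • (((b : ℚ) - a + 1) • h a) - ((b : ℚ) - a) • h a = 0 := by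
        rw [← hrel]; abel
      rw [← this]
      match_scalars
      ring
    have hane : ((b : ℚ) - a + 2) ≠ 0 := by
      have : (a : ℚ) ≤ (b : ℚ) := by exact_mod_cast le_trans hab hib
      intro hcon; linarith
    have haz : h a = 0 := by
      rcases smul_eq_zero.mp hzero with h' | h'
      · exact absurd h' hane
      · exact h'
    -- propagate to i
    have := claim (i - a) a haS ha' (by
      intro x hx
      apply hsubab
      rw [Finset.mem_Icc] at hx ⊢
      omega)
    have e : a + (i - a) = i := by omega
    rw [e] at this
    rw [this, haz, smul_zero]
  · exact h0 i hi

lemma Xop_single1 (n i : ℕ) (S : Finset ℕ) : Xop n i (Finsupp.single S 1) = xact n i S := by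
  rw [Xop_single, one_smul]

lemma uvec_expand (hS : S ⊆ Finset.Icc 1 (n - 1)) (t : ℕ) :
    ∃ (c : ℚ) (T : Finset ℕ), S ⊆ T ∧ T ⊆ Finset.Icc 1 (n - 1) ∧
      uvec n S t = c • Finsupp.single T 1 := by
  by_cases hb : 1 ≤ t ∧ t ≤ n - 1
  · refine ⟨1, insert t S, Finset.subset_insert t S, ?_, ?_⟩
    · exact Finset.insert_subset (Finset.mem_Icc.mpr hb) hS
    · rw [uvec, if_pos hb, one_smul]
  · exact ⟨0, S, le_refl _, hS, by rw [uvec, if_neg hb, zero_smul]⟩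

lemma xact_expand (hS : S ⊆ Finset.Icc 1 (n - 1)) (j : ℕ) :
    ∃ (c1 c2 : ℚ) (T1 T2 : Finset ℕ), S ⊆ T1 ∧ T1 ⊆ Finset.Icc 1 (n - 1) ∧
      S ⊆ T2 ∧ T2 ⊆ Finset.Icc 1 (n - 1) ∧
      xact n j S = c1 • Finsupp.single T1 1 + c2 • Finsupp.single T2 1 := by
  by_cases hb : 1 ≤ j ∧ j ≤ n - 1
  · by_cases hj : j ∈ S
    · obtain ⟨c1, T1, hs1, hb1, he1⟩ := uvec_expand hS (runS S j - 1)
      obtain ⟨c2, T2, hs2, hb2, he2⟩ := uvec_expand hS (runE n S j + 1)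
      refine ⟨(((runE n S j : ℚ) - (runS S j : ℚ) + 2)⁻¹) * ((runE n S j : ℚ) + 1 - (j : ℚ)) * c1,
        (((runE n S j : ℚ) - (runS S j : ℚ) + 2)⁻¹) * ((j : ℚ) - (runS S j : ℚ) + 1) * c2,
        T1, T2, hs1, hb1, hs2, hb2, ?_⟩
      rw [xact_mem hS hj, he1, he2]
      match_scalars <;> ring
    · refine ⟨1, 0, insert j S, S, Finset.subset_insert j S,
        Finset.insert_subset (Finset.mem_Icc.mpr hb) hS, le_refl _, hS, ?_⟩
      rw [xact_not_mem hS hb hj, one_smul, zero_smul, add_zero]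
  · exact ⟨0, 0, S, S, le_refl _, hS, le_refl _, hS, by rw [xact_off hb]; simp⟩

lemma Xop_harm_vec (hS : S ⊆ Finset.Icc 1 (n - 1)) (hi : i ∈ S) (v : pV)
    (hv : ∃ (c1 c2 : ℚ) (T1 T2 : Finset ℕ), S ⊆ T1 ∧ T1 ⊆ Finset.Icc 1 (n - 1) ∧
      S ⊆ T2 ∧ T2 ⊆ Finset.Icc 1 (n - 1) ∧
      v = c1 • Finsupp.single T1 1 + c2 • Finsupp.single T2 1) :
    Xop n (i - 1) v + Xop n (i + 1) v = (2 : ℚ) • Xop n i v := by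
  obtain ⟨c1, c2, T1, T2, hs1, hb1, hs2, hb2, rfl⟩ := hv
  have h1 : xact n (i - 1) T1 + xact n (i + 1) T1 = (2 : ℚ) • xact n i T1 :=
    xact_harm hb1 (hs1 hi)
  have h2 : xact n (i - 1) T2 + xact n (i + 1) T2 = (2 : ℚ) • xact n i T2 :=
    xact_harm hb2 (hs2 hi)
  simp only [map_add, map_smul, Xop_single1]
  calc c1 • xact n (i - 1) T1 + c2 • xact n (i - 1) T2
        + (c1 • xact n (i + 1) T1 + c2 • xact n (i + 1) T2)
      = c1 • (xact n (i - 1) T1 + xact n (i + 1) T1)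
        + c2 • (xact n (i - 1) T2 + xact n (i + 1) T2) := by module
    _ = c1 • ((2 : ℚ) • xact n i T1) + c2 • ((2 : ℚ) • xact n i T2) := by rw [h1, h2]
    _ = (2 : ℚ) • (c1 • xact n i T1 + c2 • xact n i T2) := by module

lemma swap_notmem (hS : S ⊆ Finset.Icc 1 (n - 1)) {i j : ℕ} (hi : i ∉ S) (hj : j ∉ S) :
    Xop n i (xact n j S) = Xop n j (xact n i S) := by
  by_cases hbi : 1 ≤ i ∧ i ≤ n - 1
  · by_cases hbj : 1 ≤ j ∧ j ≤ n - 1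
    · by_cases hij : i = j
      · rw [hij]
      · rw [xact_not_mem hS hbj hj, xact_not_mem hS hbi hi, Xop_single1, Xop_single1,
          xact_not_mem (Finset.insert_subset (Finset.mem_Icc.mpr hbj) hS) hbi
            (by simp [hij, hi]),
          xact_not_mem (Finset.insert_subset (Finset.mem_Icc.mpr hbi) hS) hbj
            (by simp [Ne.symm hij, hj]),
          Finset.insert_comm]
    · rw [Xop_off hbj, xact_off hbj, map_zero]
      rfl
  · rw [Xop_off hbi, xact_off hbi, map_zero]
    rfl

lemma swap_left (hS : S ⊆ Finset.Icc 1 (n - 1)) {i : ℕ} (hi : i ∉ S) (j : ℕ) :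
    Xop n i (xact n j S) = Xop n j (xact n i S) := by
  have key := harm_zero hS (fun j => Xop n i (xact n j S) - Xop n j (xact n i S))
    (fun j hj => sub_eq_zero.mpr (swap_notmem hS hi hj))
    (by
      intro j hj
      have A : Xop n i (xact n (j - 1) S) + Xop n i (xact n (j + 1) S)
          = (2 : ℚ) • Xop n i (xact n j S) := by
        rw [← map_add, xact_harm hS hj, map_smul]
      have B : Xop n (j - 1) (xact n i S) + Xop n (j + 1) (xact n i S)
          = (2 : ℚ) • Xop n j (xact n i S) := Xop_harm_vec hS hj _ (xact_expand hS i)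
      show Xop n i (xact n (j - 1) S) - Xop n (j - 1) (xact n i S)
          + (Xop n i (xact n (j + 1) S) - Xop n (j + 1) (xact n i S))
          = (2 : ℚ) • (Xop n i (xact n j S) - Xop n j (xact n i S))
      rw [sub_add_sub_comm, A, B, smul_sub])
  exact sub_eq_zero.mp (key j)

lemma swap_all (hS : S ⊆ Finset.Icc 1 (n - 1)) (i j : ℕ) :
    Xop n i (xact n j S) = Xop n j (xact n i S) := by
  by_cases hi : i ∈ S
  · have key := harm_zero hS (fun i' => Xop n i' (xact n j S) - Xop n j (xact n i' S))
      (fun i' hi' => sub_eq_zero.mpr (swap_left hS hi' j))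
      (by
        intro i' hi'
        have A : Xop n (i' - 1) (xact n j S) + Xop n (i' + 1) (xact n j S)
            = (2 : ℚ) • Xop n i' (xact n j S) := Xop_harm_vec hS hi' _ (xact_expand hS j)
        have B : Xop n j (xact n (i' - 1) S) + Xop n j (xact n (i' + 1) S)
            = (2 : ℚ) • Xop n j (xact n i' S) := by
          rw [← map_add, xact_harm hS hi', map_smul]
        show Xop n (i' - 1) (xact n j S) - Xop n j (xact n (i' - 1) S)
            + (Xop n (i' + 1) (xact n j S) - Xop n j (xact n (i' + 1) S))
            = (2 : ℚ) • (Xop n i' (xact n j S) - Xop n j (xact n i' S))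
        rw [sub_add_sub_comm, A, B, smul_sub])
    exact sub_eq_zero.mp (key i)
  · exact swap_left hS hi j

lemma Xop_comm (n i j : ℕ) : Xop n i ∘ₗ Xop n j = Xop n j ∘ₗ Xop n i := by
  apply Finsupp.lhom_ext
  intro S c
  simp only [LinearMap.comp_apply, Xop_single, map_smul]
  by_cases hS : S ⊆ Finset.Icc 1 (n - 1)
  · rw [swap_all hS i j]
  · rw [xact_junk hS, xact_junk hS, map_zero, map_zero]

lemma Xop_rel {n i : ℕ} (hb : 1 ≤ i ∧ i ≤ n - 1) :
    Xop n i ∘ₗ ((2 : ℚ) • Xop n i - Xop n (i - 1) - Xop n (i + 1)) = 0 := by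
  apply Finsupp.lhom_ext
  intro S c
  simp only [LinearMap.comp_apply, LinearMap.sub_apply, LinearMap.add_apply,
    LinearMap.smul_apply, Xop_single, LinearMap.zero_apply]
  have hinner : (2 : ℚ) • (c • xact n i S) - c • xact n (i - 1) S - c • xact n (i + 1) S
      = c • ((2 : ℚ) • xact n i S - xact n (i - 1) S - xact n (i + 1) S) := by module
  rw [hinner, map_smul]
  by_cases hS : S ⊆ Finset.Icc 1 (n - 1)
  · by_cases hiS : i ∈ S
    · rw [← xact_harm hS hiS, sub_sub, sub_self, map_zero, smul_zero]
    · have hT : insert i S ⊆ Finset.Icc 1 (n - 1) :=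
        Finset.insert_subset (Finset.mem_Icc.mpr hb) hS
      have hxi : xact n i S = Finsupp.single (insert i S) 1 := xact_not_mem hS hb hiS
      have e1 : Xop n i (xact n (i - 1) S) = xact n (i - 1) (insert i S) := by
        rw [swap_all hS i (i - 1), hxi, Xop_single1]
      have e2 : Xop n i (xact n (i + 1) S) = xact n (i + 1) (insert i S) := by
        rw [swap_all hS i (i + 1), hxi, Xop_single1]
      have e3 : Xop n i (xact n i S) = xact n i (insert i S) := by
        rw [hxi, Xop_single1]
      rw [map_sub, map_sub, map_smul, e1, e2, e3,
        ← xact_harm hT (Finset.mem_insert_self i S), sub_sub, sub_self, smul_zero]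
  · rw [xact_junk hS, xact_junk hS, xact_junk hS]
    simp

lemma petersonX_off' {n i : ℕ} (h : ¬(1 ≤ i ∧ i ≤ n - 1)) : petersonX n i = 0 := dif_neg h

lemma petersonX_on' {n i : ℕ} (h1 : 1 ≤ i) (h2 : i ≤ n - 1) :
    petersonX n i = MvPolynomial.X ⟨i - 1, by omega⟩ := dif_pos ⟨h1, h2⟩

/-- the commutative subalgebra of `End pV` generated by the `X_i`'s. -/
def pAlg (n : ℕ) : Subalgebra ℚ (Module.End ℚ pV) := Algebra.adjoin ℚ (Set.range (Xop n))

noncomputable instance pAlgComm (n : ℕ) : CommRing (pAlg n) :=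
  { (pAlg n).toRing with mul_comm := (Algebra.adjoinCommRingOfComm ℚ (by
    rintro a ⟨i, rfl⟩ b ⟨j, rfl⟩
    show Xop n i ∘ₗ Xop n j = Xop n j ∘ₗ Xop n i
    exact Xop_comm n i j)).mul_comm }

def gop (n i : ℕ) : pAlg n := ⟨Xop n i, Algebra.subset_adjoin ⟨i, rfl⟩⟩

def psi (n : ℕ) : MvPolynomial (Fin (n - 1)) ℚ →ₐ[ℚ] pAlg n :=
  MvPolynomial.aeval (fun j : Fin (n - 1) => gop n ((j : ℕ) + 1))

lemma psi_petersonX (n k : ℕ) : psi n (petersonX n k) = gop n k := by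
  by_cases hb : 1 ≤ k ∧ k ≤ n - 1
  · rw [petersonX_on' hb.1 hb.2, psi, MvPolynomial.aeval_X]
    congr 1
    show k - 1 + 1 = k
    omega
  · rw [petersonX_off' hb, map_zero]
    apply Subtype.ext
    show (0 : Module.End ℚ pV) = Xop n k
    exact (Xop_off hb).symm

lemma psi_gen_zero {n i : ℕ} (hb : 1 ≤ i ∧ i ≤ n - 1) :
    psi n (petersonX n i * (2 * petersonX n i - petersonX n (i - 1) - petersonX n (i + 1))) = 0 := by
  rw [map_mul, map_sub, map_sub, map_mul, psi_petersonX, psi_petersonX, psi_petersonX, map_ofNat]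
  apply Subtype.ext
  show (Xop n i) * ((2 : Module.End ℚ pV) * Xop n i - Xop n (i - 1) - Xop n (i + 1)) = 0
  have e : (2 : Module.End ℚ pV) * Xop n i - Xop n (i - 1) - Xop n (i + 1)
      = (2 : ℚ) • Xop n i - Xop n (i - 1) - Xop n (i + 1) := by
    have h2 : (2 : Module.End ℚ pV) * Xop n i = (2 : ℚ) • Xop n i := by
      rw [two_mul, two_smul]
    rw [h2]
  rw [e, Module.End.mul_eq_comp, Xop_rel hb]

lemma peterson_le_ker (n : ℕ) : ∀ a ∈ petersonIdeal n, psi n a = 0 := by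
  intro a ha
  have hle : petersonIdeal n ≤ RingHom.ker (psi n : MvPolynomial (Fin (n - 1)) ℚ →+* pAlg n) := by
    apply Ideal.span_le.mpr
    rintro _ ⟨i, hi, rfl⟩
    have hb : 1 ≤ i ∧ i ≤ n - 1 := by
      have := Finset.mem_coe.mp hi
      rwa [Finset.mem_Icc] at this
    exact RingHom.mem_ker.mpr (psi_gen_zero hb)
  exact RingHom.mem_ker.mp (hle ha)

def theta (n : ℕ) : (MvPolynomial (Fin (n - 1)) ℚ ⧸ petersonIdeal n) →ₐ[ℚ] pAlg n :=
  Ideal.Quotient.liftₐ (petersonIdeal n) (psi n) (peterson_le_ker n)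

def eps (n : ℕ) : pAlg n →ₗ[ℚ] pV where
  toFun a := (a : Module.End ℚ pV) (Finsupp.single ∅ 1)
  map_add' a b := rfl
  map_smul' c a := rfl

lemma eps_prod (n : ℕ) (L : Finset ℕ) (hL : L ⊆ Finset.Icc 1 (n - 1)) :
    eps n (∏ i ∈ L, gop n i) = Finsupp.single L 1 := by
  classical
  induction L using Finset.induction_on with
  | empty =>
      show ((1 : pAlg n) : Module.End ℚ pV) (Finsupp.single ∅ 1) = Finsupp.single ∅ 1
      rw [Subalgebra.coe_one]
      rfl
  | @insert k L' hk ih =>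
      rw [Finset.prod_insert hk]
      have hL' : L' ⊆ Finset.Icc 1 (n - 1) := fun x hx => hL (Finset.mem_insert_of_mem hx)
      have hkb : 1 ≤ k ∧ k ≤ n - 1 := by
        have := hL (Finset.mem_insert_self k L')
        rwa [Finset.mem_Icc] at this
      show ((gop n k * ∏ i ∈ L', gop n i : pAlg n) : Module.End ℚ pV) (Finsupp.single ∅ 1)
          = Finsupp.single (insert k L') 1
      rw [Subalgebra.coe_mul, Module.End.mul_apply]
      have ihh : ((∏ i ∈ L', gop n i : pAlg n) : Module.End ℚ pV) (Finsupp.single ∅ 1)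
          = Finsupp.single L' 1 := ih hL'
      rw [ihh]
      show Xop n k (Finsupp.single L' 1) = Finsupp.single (insert k L') 1
      rw [Xop_single1, xact_not_mem hL' hkb hk]

theorem peterson_linearIndependent (n : ℕ) (hn : 2 ≤ n) :
    LinearIndependent ℚ
      (fun L : ((Finset.Icc 1 (n - 1)).powerset : Finset (Finset ℕ)) =>
        Ideal.Quotient.mk (petersonIdeal n) (∏ i ∈ (L : Finset ℕ), petersonX n i)) := by
  classical
  set Phi : (MvPolynomial (Fin (n - 1)) ℚ ⧸ petersonIdeal n) →ₗ[ℚ] pV :=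
    (eps n).comp (theta n).toLinearMap with hPhi
  apply LinearIndependent.of_comp Phi
  have hcomp : (⇑Phi ∘ fun L : ((Finset.Icc 1 (n - 1)).powerset : Finset (Finset ℕ)) =>
      Ideal.Quotient.mk (petersonIdeal n) (∏ i ∈ (L : Finset ℕ), petersonX n i))
      = fun L : ((Finset.Icc 1 (n - 1)).powerset : Finset (Finset ℕ)) =>
        Finsupp.single (L : Finset ℕ) (1 : ℚ) := by
    funext L
    have hLsub : (L : Finset ℕ) ⊆ Finset.Icc 1 (n - 1) :=
      Finset.mem_powerset.mp L.2
    show Phi (Ideal.Quotient.mk (petersonIdeal n) (∏ i ∈ (L : Finset ℕ), petersonX n i))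
        = Finsupp.single (L : Finset ℕ) 1
    have h1 : theta n (Ideal.Quotient.mk (petersonIdeal n) (∏ i ∈ (L : Finset ℕ), petersonX n i))
        = ∏ i ∈ (L : Finset ℕ), gop n i := by
      rw [theta, Ideal.Quotient.liftₐ_apply]
      show psi n (∏ i ∈ (L : Finset ℕ), petersonX n i) = _
      rw [map_prod]
      exact Finset.prod_congr rfl fun i _ => psi_petersonX n i
    rw [hPhi]
    show eps n (theta n (Ideal.Quotient.mk (petersonIdeal n)
        (∏ i ∈ (L : Finset ℕ), petersonX n i))) = Finsupp.single (L : Finset ℕ) 1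
    rw [h1, eps_prod n _ hLsub]
  rw [hcomp]
  have hbasis : LinearIndependent ℚ
      (fun T : Finset ℕ => Finsupp.single T (1 : ℚ)) := by
    have := (Finsupp.basisSingleOne (R := ℚ) (ι := Finset ℕ)).linearIndependent
    simpa [Finsupp.coe_basisSingleOne] using this
  exact hbasis.comp _ Subtype.val_injective


open MvPolynomial Finset

abbrev Q (n : ℕ) := MvPolynomial (Fin (n - 1)) ℚ ⧸ petersonIdeal n

def qk (n : ℕ) : MvPolynomial (Fin (n - 1)) ℚ →+* Q n := Ideal.Quotient.mk (petersonIdeal n)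

lemma petersonX_off {n i : ℕ} (h : ¬(1 ≤ i ∧ i ≤ n - 1)) : petersonX n i = 0 := dif_neg h

lemma petersonX_on {n i : ℕ} (h1 : 1 ≤ i) (h2 : i ≤ n - 1) :
    petersonX n i = MvPolynomial.X ⟨i - 1, by omega⟩ := dif_pos ⟨h1, h2⟩

lemma petersonX_fin {n : ℕ} (j : Fin (n - 1)) : petersonX n ((j : ℕ) + 1) = MvPolynomial.X j := by
  rw [petersonX_on (by omega) (by omega)]
  exact congrArg _ (Fin.ext (by simp))

def pm (n : ℕ) (m : Multiset ℕ) : MvPolynomial (Fin (n - 1)) ℚ := (m.map (petersonX n)).prod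

@[simp] lemma pm_zero (n : ℕ) : pm n 0 = 1 := rfl

@[simp] lemma pm_cons (n i : ℕ) (m : Multiset ℕ) :
    pm n (i ::ₘ m) = petersonX n i * pm n m := by simp [pm]

lemma gen_mem {n i : ℕ} (h1 : 1 ≤ i) (h2 : i ≤ n - 1) :
    petersonX n i * (2 * petersonX n i - petersonX n (i - 1) - petersonX n (i + 1))
      ∈ petersonIdeal n :=
  Ideal.subset_span ⟨i, by simp [h1, h2], rfl⟩

lemma qk_rel {n i : ℕ} (h1 : 1 ≤ i) (h2 : i ≤ n - 1) (t : Multiset ℕ) :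
    qk n (pm n (i ::ₘ i ::ₘ t)) + qk n (pm n (i ::ₘ i ::ₘ t))
      = qk n (pm n ((i - 1) ::ₘ i ::ₘ t)) + qk n (pm n ((i + 1) ::ₘ i ::ₘ t)) := by
  have h0 : qk n (petersonX n i *
      (2 * petersonX n i - petersonX n (i - 1) - petersonX n (i + 1)) * pm n t) = 0 :=
    Ideal.Quotient.eq_zero_iff_mem.mpr (Ideal.mul_mem_right _ _ (gen_mem h1 h2))
  have key : pm n (i ::ₘ i ::ₘ t) + pm n (i ::ₘ i ::ₘ t)
      = petersonX n i * (2 * petersonX n i - petersonX n (i - 1) - petersonX n (i + 1)) * pm n t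
        + (pm n ((i - 1) ::ₘ i ::ₘ t) + pm n ((i + 1) ::ₘ i ::ₘ t)) := by
    simp only [pm_cons]; ring
  have := congrArg (qk n) key
  rw [map_add, map_add, map_add, h0, zero_add] at this
  exact this

/-- The core "maximum principle" lemma: any dual functional killing the squarefree
monomial classes kills all monomial classes. -/
lemma phi_pm_zero {n : ℕ} (hn : 2 ≤ n) (φ : Module.Dual ℚ (Q n))
    (hφ : ∀ L ∈ (Finset.Icc 1 (n - 1)).powerset,
      φ (qk n (∏ i ∈ L, petersonX n i)) = 0)
    (m : Multiset ℕ) (hm : ∀ x ∈ m, x ≤ n) : φ (qk n (pm n m)) = 0 := by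
  classical
  set d := Multiset.card m with hd
  set big : Multiset ℕ := d • (Finset.Icc 0 n).val with hbig
  set rel : Finset (Multiset ℕ) := (Multiset.powersetCard d big).toFinset with hrel
  have mem_rel : ∀ {m' : Multiset ℕ}, Multiset.card m' = d → (∀ x ∈ m', x ≤ n) → m' ∈ rel := by
    intro m' hcard hle
    rw [hrel, Multiset.mem_toFinset, Multiset.mem_powersetCard]
    refine ⟨Multiset.le_iff_count.mpr fun a => ?_, hcard⟩
    by_cases ha : a ∈ m'
    · have h1 : Multiset.count a big = d * 1 := by
        rw [hbig, Multiset.count_nsmul]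
        congr 1
        exact Multiset.count_eq_one_of_mem (Finset.Icc 0 n).nodup
          (by simp [Finset.mem_Icc, hle a ha])
      rw [h1, mul_one, ← hcard]
      exact Multiset.count_le_card a m'
    · simp [Multiset.count_eq_zero_of_notMem ha]
  set A : Multiset ℕ → ℚ := fun m' => φ (qk n (pm n m')) with hA
  -- degenerate monomials vanish
  have Aoff : ∀ m' : Multiset ℕ, (∃ x ∈ m', ¬(1 ≤ x ∧ x ≤ n - 1)) → A m' = 0 := by
    rintro m' ⟨x, hx, hxoff⟩
    have : pm n m' = 0 := by
      apply Multiset.prod_eq_zero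
      exact Multiset.mem_map.mpr ⟨x, hx, petersonX_off hxoff⟩
    simp [hA, this]
  -- squarefree monomials vanish
  have Asf : ∀ m' : Multiset ℕ, m'.Nodup → (∀ x ∈ m', 1 ≤ x ∧ x ≤ n - 1) → A m' = 0 := by
    intro m' hnd hon
    have hval : m'.toFinset.val = m' := by
      rw [Multiset.toFinset_val, Multiset.dedup_eq_self.mpr hnd]
    have hpm : pm n m' = ∏ i ∈ m'.toFinset, petersonX n i := by
      rw [Finset.prod_eq_multiset_prod, hval]; rfl
    have hLmem : m'.toFinset ∈ (Finset.Icc 1 (n - 1)).powerset := by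
      rw [Finset.mem_powerset]
      intro x hx
      rw [Multiset.mem_toFinset] at hx
      exact Finset.mem_Icc.mpr ⟨(hon x hx).1, (hon x hx).2⟩
    rw [hA]; simp only; rw [hpm]
    exact hφ _ hLmem
  have hmrel : m ∈ rel := mem_rel rfl hm
  have cardrel : ∀ {m'}, m' ∈ rel → Multiset.card m' = d := by
    intro m' h
    rw [hrel, Multiset.mem_toFinset, Multiset.mem_powersetCard] at h
    exact h.2
  have lerel : ∀ {m'}, m' ∈ rel → ∀ x ∈ m', x ≤ n := by
    intro m' h x hx
    rw [hrel, Multiset.mem_toFinset, Multiset.mem_powersetCard] at h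
    have := Multiset.le_iff_count.mp h.1 x
    have hc : 0 < Multiset.count x big := lt_of_lt_of_le (Multiset.count_pos.mpr hx) this
    have : x ∈ big := Multiset.count_pos.mp hc
    rw [hbig] at this
    have := Multiset.mem_of_mem_nsmul this
    simpa [Finset.mem_Icc] using this
  set img := rel.image fun m' => |A m'| with himgdef
  have himg : img.Nonempty := ⟨_, Finset.mem_image_of_mem _ hmrel⟩
  set M := img.max' himg with hM
  have habs : ∀ {m'}, m' ∈ rel → |A m'| ≤ M := by
    intro m' h
    exact Finset.le_max' img _ (Finset.mem_image_of_mem _ h)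
  suffices hM0 : M ≤ 0 by
    have := habs hmrel
    have : |A m| ≤ 0 := le_trans this hM0
    have := abs_nonneg (A m)
    have : |A m| = 0 := le_antisymm ‹|A m| ≤ 0› ‹0 ≤ |A m|›
    exact abs_eq_zero.mp this
  by_contra hMpos
  push_neg at hMpos
  -- pick an achiever of the max with minimal site-sum
  obtain ⟨m1, hm1, hm1M⟩ : ∃ m1 ∈ rel, |A m1| = M := by
    obtain ⟨m1, hm1, h⟩ := Finset.mem_image.mp (Finset.max'_mem img himg)
    exact ⟨m1, hm1, h⟩
  obtain ⟨m0, hm0mem, hm0min⟩ :=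
    Finset.exists_min_image (rel.filter fun m' => |A m'| = M) (fun m' => m'.sum)
      ⟨m1, Finset.mem_filter.mpr ⟨hm1, hm1M⟩⟩
  obtain ⟨hm0rel, hm0M⟩ := Finset.mem_filter.mp hm0mem
  -- all sites on-board
  have hon : ∀ x ∈ m0, 1 ≤ x ∧ x ≤ n - 1 := by
    intro x hx
    by_contra hxoff
    have := Aoff m0 ⟨x, hx, hxoff⟩
    rw [this] at hm0M
    simp at hm0M
    linarith
  -- m0 has a duplicated site
  have hdup : ∃ i, 2 ≤ Multiset.count i m0 := by
    by_contra hnd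
    push_neg at hnd
    have : m0.Nodup := Multiset.nodup_iff_count_le_one.mpr fun a => by
      have := hnd a; omega
    have := Asf m0 this hon
    rw [this] at hm0M
    simp at hm0M
    linarith
  obtain ⟨i, hi2⟩ := hdup
  have himem : i ∈ m0 := Multiset.count_pos.mp (by omega)
  obtain ⟨t1, ht1⟩ := Multiset.exists_cons_of_mem himem
  have hit1 : i ∈ t1 := by
    have := hi2
    rw [ht1, Multiset.count_cons_self] at this
    exact Multiset.count_pos.mp (by omega)
  obtain ⟨t, ht⟩ := Multiset.exists_cons_of_mem hit1
  have hm0eq : m0 = i ::ₘ i ::ₘ t := by rw [ht1, ht]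
  have hion := hon i himem
  -- the two children
  set l : Multiset ℕ := (i - 1) ::ₘ i ::ₘ t with hldef
  set r : Multiset ℕ := (i + 1) ::ₘ i ::ₘ t with hrdef
  have hcard0 : Multiset.card m0 = d := cardrel hm0rel
  have hlrel : l ∈ rel := by
    apply mem_rel
    · rw [hldef]
      have := hcard0
      rw [hm0eq] at this
      simp at this ⊢
      omega
    · intro x hx
      rw [hldef] at hx
      rcases Multiset.mem_cons.mp hx with h | hx
      · omega
      rcases Multiset.mem_cons.mp hx with h | hx
      · omega
      · exact lerel hm0rel x (by rw [hm0eq]; exact Multiset.mem_cons_of_mem (Multiset.mem_cons_of_mem hx))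
  have hrrel : r ∈ rel := by
    apply mem_rel
    · rw [hrdef]
      have := hcard0
      rw [hm0eq] at this
      simp at this ⊢
      omega
    · intro x hx
      rw [hrdef] at hx
      rcases Multiset.mem_cons.mp hx with h | hx
      · omega
      rcases Multiset.mem_cons.mp hx with h | hx
      · omega
      · exact lerel hm0rel x (by rw [hm0eq]; exact Multiset.mem_cons_of_mem (Multiset.mem_cons_of_mem hx))
  -- the linear relation
  have hrel2 : A m0 + A m0 = A l + A r := by
    have := qk_rel hion.1 hion.2 t
    have := congrArg φ this
    rw [map_add, map_add] at this
    rw [hA, hm0eq]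
    exact this
  have hlM : |A l| ≤ M := habs hlrel
  have hrM : |A r| ≤ M := habs hrrel
  have hlb := abs_le.mp hlM
  have hrb := abs_le.mp hrM
  -- A l is also an achiever
  have hAl : A l = A m0 := by
    rcases abs_eq (le_of_lt hMpos) |>.mp hm0M with h | h
    · nlinarith [hlb.2, hrb.2, hlb.1, hrb.1]
    · nlinarith [hlb.2, hrb.2, hlb.1, hrb.1]
  have hlach : l ∈ rel.filter fun m' => |A m'| = M := by
    refine Finset.mem_filter.mpr ⟨hlrel, ?_⟩
    rw [hAl, hm0M]
  have := hm0min l hlach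
  -- but l has strictly smaller sum
  have hsum : l.sum + 1 = m0.sum := by
    rw [hldef, hm0eq]
    simp [Multiset.sum_cons]
    omega
  omega


open MvPolynomial Finset

theorem span_top (n : ℕ) (hn : 2 ≤ n) :
    Submodule.span ℚ
      ((fun L : Finset ℕ => Ideal.Quotient.mk (petersonIdeal n) (∏ i ∈ L, petersonX n i)) ''
        ↑(Finset.Icc 1 (n - 1)).powerset) = ⊤ := by
  classical
  set U := Submodule.span ℚ
      ((fun L : Finset ℕ => Ideal.Quotient.mk (petersonIdeal n) (∏ i ∈ L, petersonX n i)) ''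
        ↑(Finset.Icc 1 (n - 1)).powerset) with hU
  -- step 1 : every monomial class lies in U
  have step1 : ∀ m : Multiset ℕ, (∀ x ∈ m, x ≤ n) → qk n (pm n m) ∈ U := by
    intro m hm
    rw [← Submodule.Quotient.mk_eq_zero U]
    rw [← Module.forall_dual_apply_eq_zero_iff ℚ]
    intro ψ
    have hφ : ∀ L ∈ (Finset.Icc 1 (n - 1)).powerset,
        (ψ.comp U.mkQ) (qk n (∏ i ∈ L, petersonX n i)) = 0 := by
      intro L hL
      have hmem : qk n (∏ i ∈ L, petersonX n i) ∈ U := by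
        apply Submodule.subset_span
        exact ⟨L, Finset.mem_coe.mpr hL, rfl⟩
      simp only [LinearMap.comp_apply]
      rw [Submodule.mkQ_apply, (Submodule.Quotient.mk_eq_zero U).mpr hmem, map_zero]
    exact phi_pm_zero hn (ψ.comp U.mkQ) hφ m hm
  -- step 2 : monomial classes span everything
  set U' : Submodule ℚ (Q n) := Submodule.span ℚ
      {y | ∃ m : Multiset ℕ, (∀ x ∈ m, x ≤ n) ∧ y = qk n (pm n m)} with hU'
  have step2 : ∀ p : MvPolynomial (Fin (n - 1)) ℚ, qk n p ∈ U' := by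
    intro p
    induction p using MvPolynomial.induction_on with
    | C a =>
        have h1 : qk n 1 ∈ U' := by
          apply Submodule.subset_span
          exact ⟨0, by simp, by simp⟩
        have : qk n (MvPolynomial.C a) = a • qk n 1 := by
          have : (MvPolynomial.C a : MvPolynomial (Fin (n - 1)) ℚ) = a • 1 := by
            rw [MvPolynomial.smul_eq_C_mul, mul_one]
          rw [this]
          exact map_smul (Ideal.Quotient.mkₐ ℚ (petersonIdeal n)) a 1
        rw [this]
        exact Submodule.smul_mem _ _ h1
    | add p q hp hq => rw [map_add]; exact Submodule.add_mem _ hp hq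
    | mul_X p j hp =>
        rw [map_mul]
        have hX : qk n (MvPolynomial.X j) = qk n (pm n {(j : ℕ) + 1}) := by
          congr 1
          have : pm n {(j : ℕ) + 1} = petersonX n ((j : ℕ) + 1) * 1 := by
            simp [pm]
          rw [this, mul_one, petersonX_fin]
        have key : ∀ u ∈ U', u * qk n (MvPolynomial.X j) ∈ U' := by
          intro u hu
          induction hu using Submodule.span_induction with
          | mem y hy =>
              obtain ⟨m, hmle, rfl⟩ := hy
              apply Submodule.subset_span
              refine ⟨((j : ℕ) + 1) ::ₘ m, ?_, ?_⟩
              · intro x hx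
                rcases Multiset.mem_cons.mp hx with h | h
                · have := j.isLt; omega
                · exact hmle x h
              · rw [pm_cons, map_mul, petersonX_fin, mul_comm]
          | zero => simpa using Submodule.zero_mem U'
          | add y z _ _ hy hz => rw [add_mul]; exact Submodule.add_mem _ hy hz
          | smul a y _ hy => rw [smul_mul_assoc]; exact Submodule.smul_mem _ _ hy
        exact key _ hp
  -- step 3 : assemble
  rw [eq_top_iff]
  intro x _
  obtain ⟨p, rfl⟩ := Ideal.Quotient.mk_surjective (I := petersonIdeal n) x
  have hx : qk n p ∈ U' := step2 p
  have hle : U' ≤ U := by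
    rw [hU']
    apply Submodule.span_le.mpr
    rintro y ⟨m, hmle, rfl⟩
    exact step1 m hmle
  exact hle hx


end PetPf

/-- For `n ≥ 2`, the images in `R_n = ℚ[x_1,…,x_{n-1}]/I_n` of the
`2^{n-1}` square-free monomials `∏_{i∈L} x_i`, for `L ⊆ {1,…,n-1}`, form a `ℚ`-basis of
`R_n`; in particular `dim_ℚ R_n = 2^{n-1}`. -/
theorem squarefree_monomials_basis (n : ℕ) (hn : 2 ≤ n) :
    (LinearIndependent ℚ
      (fun L : ((Finset.Icc 1 (n - 1)).powerset : Finset (Finset ℕ)) =>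
        Ideal.Quotient.mk (petersonIdeal n) (∏ i ∈ (L : Finset ℕ), petersonX n i))) ∧
    Submodule.span ℚ
      ((fun L : Finset ℕ => Ideal.Quotient.mk (petersonIdeal n) (∏ i ∈ L, petersonX n i)) ''
        ↑(Finset.Icc 1 (n - 1)).powerset) = ⊤ ∧
    Module.finrank ℚ (MvPolynomial (Fin (n - 1)) ℚ ⧸ petersonIdeal n) = 2 ^ (n - 1) := by
  classical
  have hind := PetPf.peterson_linearIndependent n hn
  have hspan := PetPf.span_top n hn
  refine ⟨hind, hspan, ?_⟩
  have hrange : Set.range (fun L : ((Finset.Icc 1 (n - 1)).powerset : Finset (Finset ℕ)) =>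
      Ideal.Quotient.mk (petersonIdeal n) (∏ i ∈ (L : Finset ℕ), petersonX n i))
      = (fun L : Finset ℕ => Ideal.Quotient.mk (petersonIdeal n) (∏ i ∈ L, petersonX n i)) ''
        ↑(Finset.Icc 1 (n - 1)).powerset := by
    ext y
    constructor
    · rintro ⟨L, rfl⟩
      exact ⟨(L : Finset ℕ), Finset.mem_coe.mpr L.2, rfl⟩
    · rintro ⟨L, hL, rfl⟩
      exact ⟨⟨L, Finset.mem_coe.mp hL⟩, rfl⟩
  have htop : ⊤ ≤ Submodule.span ℚ (Set.range
      (fun L : ((Finset.Icc 1 (n - 1)).powerset : Finset (Finset ℕ)) =>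
        Ideal.Quotient.mk (petersonIdeal n) (∏ i ∈ (L : Finset ℕ), petersonX n i))) := by
    rw [hrange, hspan]
  have b := Module.Basis.mk hind htop
  rw [Module.finrank_eq_card_basis b, Fintype.card_coe, Finset.card_powerset, Nat.card_Icc]
  congr 1
end
end
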